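/- arXiv:2301.10519 — 6 statements merged into one kernel-verified Lean document; each statement's English description precedes it below -/
import Mathlib

section
/- A language over a one-letter alphabet Σ = {a} is QF-MFO-definable if, and only if, it is finite or co-finite (i.e., its complement within {a}⁺ is finite). -/
/-- Formulas of the quantifier-free logic QF-MFO over the one-letter alphabet.
Variables are naturals; `k` ranges over natural-number constants; `last`
denotes the last position of the string. -/
inductive QF : Type
  | ltK : ℕ → ℕ → QF       -- `x < k`
  | gtK : ℕ → ℕ → QF       -- `x > k`
  | ltVK : ℕ → ℕ → ℕ → QF  -- `x < y + k`
  | gtVK : ℕ → ℕ → ℕ → QF  -- `x > y + k`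
  | lastGt : ℕ → QF        -- `k < last`
  | lastLt : ℕ → QF        -- `k > last`
  | and : QF → QF → QF
  | or : QF → QF → QF

namespace QF

/-- Satisfaction of a QF-MFO formula over the string `aⁿ` (identified with
its length `n`), with assignment `ν` of variables to positions; the last
position is `n - 1`. -/
def Sat (n : ℕ) : (ℕ → ℕ) → QF → Prop
  | ν, .ltK x k => ν x < k
  | ν, .gtK x k => ν x > k
  | ν, .ltVK x y k => ν x < ν y + k
  | ν, .gtVK x y k => ν x > ν y + k
  | _, .lastGt k => k < n - 1
  | _, .lastLt k => k > n - 1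
  | ν, .and φ ψ => Sat n ν φ ∧ Sat n ν ψ
  | ν, .or φ ψ => Sat n ν φ ∨ Sat n ν ψ

/-- Variables occurring in a QF-MFO formula. -/
def fv : QF → Finset ℕ
  | .ltK x _ => {x}
  | .gtK x _ => {x}
  | .ltVK x y _ => {x, y}
  | .gtVK x y _ => {x, y}
  | .lastGt _ => ∅
  | .lastLt _ => ∅
  | .and φ ψ => fv φ ∪ fv ψ
  | .or φ ψ => fv φ ∪ fv ψ

/-- The language (set of lengths `n ≥ 1`, identifying `aⁿ` with `n`)
defined by a QF-MFO sentence. -/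
def Lang (φ : QF) : Set ℕ :=
  {n | 1 ≤ n ∧ Sat n (fun _ => 0) φ}

end QF

namespace QFAux

open QF

/-- a tautology -/
def top : QF := .or (.lastLt 1) (.lastGt 0)

/-- an unsatisfiable sentence -/
def bot : QF := .and (.lastLt 1) (.lastGt 0)

/-- a sentence defining `{m}` (for `m ≥ 1`) -/
def eqF (m : ℕ) : QF := .and (.lastLt m) (if m ≤ 1 then top else .lastGt (m-2))

lemma fv_top : fv top = ∅ := rfl

lemma fv_bot : fv bot = ∅ := rfl

lemma fv_eqF (m : ℕ) : fv (eqF m) = ∅ := by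
  unfold eqF
  split <;> rfl

lemma lang_top : Lang top = {n | 1 ≤ n} := by
  ext n
  simp only [Lang, top, Sat, Set.mem_setOf_eq]
  omega

lemma lang_bot : Lang bot = ∅ := by
  rw [Set.eq_empty_iff_forall_notMem]
  intro n hn
  simp only [Lang, bot, Sat, Set.mem_setOf_eq] at hn
  omega

lemma lang_or (φ ψ : QF) : Lang (.or φ ψ) = Lang φ ∪ Lang ψ := by
  ext n
  simp only [Lang, Sat, Set.mem_setOf_eq, Set.mem_union]
  tauto

lemma lang_eqF (m : ℕ) (hm : 1 ≤ m) : Lang (eqF m) = {m} := by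
  ext n
  unfold Lang eqF
  by_cases h : m ≤ 1
  · interval_cases m
    simp only [if_pos (le_refl 1), Sat, top, Set.mem_setOf_eq, Set.mem_singleton_iff]
    omega
  · rw [if_neg h]
    simp only [Sat, Set.mem_setOf_eq, Set.mem_singleton_iff]
    omega

lemma lang_lastGt (k : ℕ) : Lang (.lastGt k) = {n | k + 1 < n} := by
  ext n
  simp only [Lang, Sat, Set.mem_setOf_eq]
  omega

/-- Every finite language of positive lengths is definable. -/
lemma exists_of_finset (s : Finset ℕ) (hs : ∀ n ∈ s, 1 ≤ n) :
    ∃ φ : QF, φ.fv = ∅ ∧ (↑s : Set ℕ) = Lang φ := by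
  induction s using Finset.induction_on with
  | empty => exact ⟨bot, fv_bot, by simp [lang_bot]⟩
  | @insert a s ha ih =>
      obtain ⟨φ, hfv, hl⟩ := ih (fun n hn => hs n (Finset.mem_insert_of_mem hn))
      refine ⟨.or (eqF a) φ, ?_, ?_⟩
      · show fv (eqF a) ∪ fv φ = ∅
        rw [fv_eqF, hfv, Finset.empty_union]
      · rw [lang_or, lang_eqF a (hs a (Finset.mem_insert_self a s)), ← hl,
          Finset.coe_insert, Set.insert_eq]

lemma finite_or_cofinite_of_fv_empty (φ : QF) (h : φ.fv = ∅) (ν : ℕ → ℕ) :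
    ({n | Sat n ν φ}).Finite ∨ ({n | Sat n ν φ}ᶜ).Finite := by
  induction φ with
  | ltK x k => simp [fv] at h
  | gtK x k => simp [fv] at h
  | ltVK x y k => simp [fv] at h
  | gtVK x y k => simp [fv] at h
  | lastGt k =>
      right
      apply Set.Finite.subset (Set.finite_Iio (k+2))
      intro n hn
      simp only [Set.mem_compl_iff, Set.mem_setOf_eq, Sat] at hn
      simp only [Set.mem_Iio]
      omega
  | lastLt k =>
      left
      apply Set.Finite.subset (Set.finite_Iio (k+2))
      intro n hn
      simp only [Set.mem_setOf_eq, Sat] at hn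
      simp only [Set.mem_Iio]
      omega
  | and φ ψ ihφ ihψ =>
      simp only [fv, Finset.union_eq_empty] at h
      have e : {n | Sat n ν (φ.and ψ)} = {n | Sat n ν φ} ∩ {n | Sat n ν ψ} := rfl
      rcases ihφ h.1 with h1 | h1
      · exact Or.inl (e ▸ h1.inter_of_left _)
      · rcases ihψ h.2 with h2 | h2
        · exact Or.inl (e ▸ h2.inter_of_right _)
        · right
          rw [e, Set.compl_inter]
          exact h1.union h2
  | or φ ψ ihφ ihψ =>
      simp only [fv, Finset.union_eq_empty] at h
      have e : {n | Sat n ν (φ.or ψ)} = {n | Sat n ν φ} ∪ {n | Sat n ν ψ} := rfl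
      rcases ihφ h.1 with h1 | h1
      · rcases ihψ h.2 with h2 | h2
        · exact Or.inl (e ▸ h1.union h2)
        · right
          apply h2.subset
          rw [e, Set.compl_union]
          exact Set.inter_subset_right
      · right
        apply h1.subset
        rw [e, Set.compl_union]
        exact Set.inter_subset_left

end QFAux

/-- A language over the one-letter alphabet `{a}` (identifying
the nonempty string `aⁿ` with `n ≥ 1`) is QF-MFO-definable iff it is finite
or co-finite (its complement within `{a}⁺` is finite). -/
theorem qfmfo_definable_iff_finite_or_cofinite (L : Set ℕ)
    (hL : L ⊆ {n : ℕ | 1 ≤ n}) :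
    (∃ φ : QF, φ.fv = ∅ ∧ L = QF.Lang φ) ↔
    (L.Finite ∨ ({n : ℕ | 1 ≤ n} \ L).Finite) := by
  constructor
  · rintro ⟨φ, hfv, rfl⟩
    rcases QFAux.finite_or_cofinite_of_fv_empty φ hfv (fun _ => 0) with h | h
    · left
      apply h.subset
      intro n hn
      exact hn.2
    · right
      apply h.subset
      rintro n ⟨hn1, hn2⟩
      simp only [Set.mem_compl_iff, Set.mem_setOf_eq]
      intro hsat
      exact hn2 ⟨hn1, hsat⟩
  · rintro (hfin | hcof)
    · obtain ⟨φ, hfv, hl⟩ := QFAux.exists_of_finset hfin.toFinset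
        (fun n hn => hL (hfin.mem_toFinset.mp hn))
      refine ⟨φ, hfv, ?_⟩
      rw [← hl, Set.Finite.coe_toFinset]
    · -- co-finite case
      obtain ⟨N0, hN0⟩ := hcof.bddAbove
      set N := N0 + 1 with hN
      have hS : (L ∩ Set.Iic N).Finite :=
        (Set.finite_Iic N).subset Set.inter_subset_right
      obtain ⟨φ1, hfv1, hl1⟩ := QFAux.exists_of_finset hS.toFinset
        (fun n hn => hL (hS.mem_toFinset.mp hn).1)
      refine ⟨.or φ1 (.lastGt (N - 1)), by simp [QF.fv, hfv1], ?_⟩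
      rw [QFAux.lang_or, ← hl1, Set.Finite.coe_toFinset, QFAux.lang_lastGt]
      have hN1 : N - 1 + 1 = N := by omega
      rw [hN1]
      ext n
      simp only [Set.mem_union, Set.mem_inter_iff, Set.mem_Iic, Set.mem_setOf_eq]
      constructor
      · intro hn
        by_cases hle : n ≤ N
        · exact Or.inl ⟨hn, hle⟩
        · exact Or.inr (by omega)
      · rintro (⟨hn, _⟩ | hn)
        · exact hn
        · by_contra hnL
          have : n ∈ {n : ℕ | 1 ≤ n} \ L := ⟨by simp; omega, hnL⟩
          have := hN0 this
          omega
end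

section
/- A language over a one-letter alphabet Σ = {a} is MFO-definable if, and only if, it is finite or co-finite (i.e., its complement within {a}⁺ is finite). -/
/-- Formulas of monadic first-order logic of order (MFO) over alphabet `α`.
First-order variables are represented by natural numbers. -/
inductive MFO (α : Type) : Type
  | char : α → ℕ → MFO α          -- `a(x)`
  | lt : ℕ → ℕ → MFO α            -- `x < y`
  | not : MFO α → MFO α           -- `¬ φ`
  | or : MFO α → MFO α → MFO α    -- `φ ∨ ψ`
  | ex : ℕ → MFO α → MFO α        -- `∃ x. φ`

namespace MFO

/-- Satisfaction of an MFO formula over a string `w` with assignment `ν`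
mapping variables to positions of `w`. -/
def Sat {α : Type} (w : List α) : (ℕ → ℕ) → MFO α → Prop
  | ν, .char a x => w[ν x]? = some a
  | ν, .lt x y => ν x < ν y
  | ν, .not φ => ¬ Sat w ν φ
  | ν, .or φ ψ => Sat w ν φ ∨ Sat w ν ψ
  | ν, .ex x φ => ∃ i < w.length, Sat w (Function.update ν x i) φ

/-- Free variables of an MFO formula. -/
def fv {α : Type} : MFO α → Finset ℕ
  | .char _ x => {x}
  | .lt x y => {x, y}
  | .not φ => fv φ
  | .or φ ψ => fv φ ∪ fv ψ
  | .ex x φ => fv φ \ {x}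

/-- The language of nonempty strings defined by an MFO formula
(intended to be used with sentences, whose satisfaction does not
depend on the assignment). -/
def Lang {α : Type} (φ : MFO α) : Set (List α) :=
  {w | w ≠ [] ∧ Sat w (fun _ => 0) φ}

/-- `φ₁ ∧ φ₂` as the abbreviation `¬(¬φ₁ ∨ ¬φ₂)`. -/
def and {α : Type} (φ ψ : MFO α) : MFO α := .not (.or (.not φ) (.not ψ))

/-- A language (of nonempty strings) is MFO-definable iff it is the language
of some MFO sentence (closed formula). -/
def Definable {α : Type} (L : Set (List α)) : Prop :=
  ∃ φ : MFO α, φ.fv = ∅ ∧ L = Lang φ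

end MFO

open MFO in
/-- Quantifier depth. -/
def MFO.qd {α : Type} : MFO α → ℕ
  | .char _ _ => 0
  | .lt _ _ => 0
  | .not φ => qd φ
  | .or φ ψ => max (qd φ) (qd ψ)
  | .ex _ φ => qd φ + 1

namespace MFOUnit

/-- EF-style equivalence of two assignments over words of lengths `n`,`m`,
with all gaps preserved up to threshold `t`. -/
def E (t n m : ℕ) (ν μ : ℕ → ℕ) : Prop :=
  min t n = min t m ∧
  (∀ x, min t (ν x) = min t (μ x)) ∧
  (∀ x, min t (n - ν x) = min t (m - μ x)) ∧
  (∀ x y, min t (ν y - ν x) = min t (μ y - μ x))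

theorem E.mono {s t n m : ℕ} {ν μ : ℕ → ℕ} (hst : s ≤ t) (h : E t n m ν μ) :
    E s n m ν μ := by
  obtain ⟨h1, h2, h3, h4⟩ := h
  refine ⟨?_, fun x => ?_, fun x => ?_, fun x y => ?_⟩
  · omega
  · have := h2 x; omega
  · have := h3 x; omega
  · have := h4 x y; omega

theorem E.symm {t n m : ℕ} {ν μ : ℕ → ℕ} (h : E t n m ν μ) : E t m n μ ν := by
  obtain ⟨h1, h2, h3, h4⟩ := h
  exact ⟨h1.symm, fun x => (h2 x).symm, fun x => (h3 x).symm, fun x y => (h4 x y).symm⟩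

/-- `a'` is the correspondent of the landmark `a`. -/
def Corr (n m : ℕ) (ν μ : ℕ → ℕ) (a a' : ℕ) : Prop :=
  (a = 0 ∧ a' = 0) ∨ (a = n ∧ a' = m) ∨ ∃ z, a = ν z ∧ a' = μ z

theorem pairGap {t n m : ℕ} {ν μ : ℕ → ℕ} (hE : E t n m ν μ)
    (hν : ∀ x, ν x < n) (hμ : ∀ x, μ x < m) {a a' b b' : ℕ}
    (ha : Corr n m ν μ a a') (hb : Corr n m ν μ b b') :
    min t (b - a) = min t (b' - a') := by
  obtain ⟨h1, h2, h3, h4⟩ := hE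
  rcases ha with ⟨rfl, rfl⟩ | ⟨rfl, rfl⟩ | ⟨z, rfl, rfl⟩ <;>
    rcases hb with ⟨rfl, rfl⟩ | ⟨rfl, rfl⟩ | ⟨y, rfl, rfl⟩
  · simp
  · simpa using h1
  · simpa using h2 y
  · simp
  · simp
  · have h5 := hν y; have h6 := hμ y
    rw [Nat.sub_eq_zero_of_le h5.le, Nat.sub_eq_zero_of_le h6.le]
  · simp
  · exact h3 z
  · exact h4 z y

section Arith

variable {s t n m i a a' b b' j vy uy : ℕ}

private lemma partA (hs : 1 ≤ s) (hts : 2 * s ≤ t)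
    (D0a : a = a' ∨ (t ≤ a ∧ t ≤ a'))
    (Dan : n - a = m - a' ∨ (t ≤ n - a ∧ t ≤ m - a'))
    (hai : a ≤ i) (hi : i < n) (hca : i - a < s) :
    a' + (i - a) < m ∧ min s i = min s (a' + (i - a)) ∧
      min s (n - i) = min s (m - (a' + (i - a))) := by omega

private lemma caseA_left (hs : 1 ≤ s) (hts : 2 * s ≤ t)
    (h1 : a - vy = a' - uy ∨ (t ≤ a - vy ∧ t ≤ a' - uy))
    (h2 : vy - a = uy - a' ∨ (t ≤ vy - a ∧ t ≤ uy - a'))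
    (h5 : vy ≤ a) (hai : a ≤ i) (hca : i - a < s) :
    min s (i - vy) = min s ((a' + (i - a)) - uy) ∧
      min s (vy - i) = min s (uy - (a' + (i - a))) := by omega

private lemma caseA_right (hs : 1 ≤ s) (hts : 2 * s ≤ t)
    (h1 : a - vy = a' - uy ∨ (t ≤ a - vy ∧ t ≤ a' - uy))
    (h2 : vy - a = uy - a' ∨ (t ≤ vy - a ∧ t ≤ uy - a'))
    (h5 : b ≤ vy) (hai : a ≤ i) (hib : i ≤ b) (hca : i - a < s) :
    min s (i - vy) = min s ((a' + (i - a)) - uy) ∧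
      min s (vy - i) = min s (uy - (a' + (i - a))) := by omega

private lemma partB (hs : 1 ≤ s) (hts : 2 * s ≤ t)
    (D0b : b = b' ∨ (t ≤ b ∧ t ≤ b'))
    (Dbn : n - b = m - b' ∨ (t ≤ n - b ∧ t ≤ m - b'))
    (hb'm : b' ≤ m) (hib : i ≤ b) (hbn : b ≤ n) (hi : i < n) (hcb : b - i < s) :
    b - i ≤ b' ∧ b' - (b - i) < m ∧ min s i = min s (b' - (b - i)) ∧
      min s (n - i) = min s (m - (b' - (b - i))) := by omega

private lemma caseB_left (hs : 1 ≤ s) (hts : 2 * s ≤ t)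
    (h2 : vy - a = uy - a' ∨ (t ≤ vy - a ∧ t ≤ uy - a'))
    (h5 : vy ≤ a) (hai : a ≤ i) (hca : s ≤ i - a) (hja : s ≤ j - a') :
    min s (i - vy) = min s (j - uy) ∧ min s (vy - i) = min s (uy - j) := by omega

private lemma caseB_right (hs : 1 ≤ s) (hts : 2 * s ≤ t)
    (h3 : b - vy = b' - uy ∨ (t ≤ b - vy ∧ t ≤ b' - uy))
    (h4 : vy - b = uy - b' ∨ (t ≤ vy - b ∧ t ≤ uy - b'))
    (h5 : b ≤ vy) (hib : i ≤ b) (hj : j + (b - i) = b') :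
    min s (i - vy) = min s (j - uy) ∧ min s (vy - i) = min s (uy - j) := by omega

private lemma partC (hs : 1 ≤ s) (hts : 2 * s ≤ t)
    (Dab : b - a = b' - a' ∨ (t ≤ b - a ∧ t ≤ b' - a'))
    (hb'm : b' ≤ m) (hai : a ≤ i) (hib : i ≤ b) (hbn : b ≤ n)
    (hca : s ≤ i - a) (hcb : s ≤ b - i) :
    2 * s ≤ b' - a' ∧ a' + s < m ∧ min s i = min s (a' + s) ∧
      min s (n - i) = min s (m - (a' + s)) := by omega

private lemma caseC_left (hs : 1 ≤ s) (hts : 2 * s ≤ t)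
    (h2 : vy - a = uy - a' ∨ (t ≤ vy - a ∧ t ≤ uy - a'))
    (h5 : vy ≤ a) (hai : a ≤ i) (hca : s ≤ i - a) :
    min s (i - vy) = min s ((a' + s) - uy) ∧ min s (vy - i) = min s (uy - (a' + s)) := by
  omega

private lemma caseC_right (hs : 1 ≤ s) (hts : 2 * s ≤ t)
    (h3 : b - vy = b' - uy ∨ (t ≤ b - vy ∧ t ≤ b' - uy))
    (h4 : vy - b = uy - b' ∨ (t ≤ vy - b ∧ t ≤ uy - b'))
    (h5 : b ≤ vy) (hib : i ≤ b) (hcb : s ≤ b - i) (hjb : 2 * s ≤ b' - a') :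
    min s (i - vy) = min s ((a' + s) - uy) ∧ min s (vy - i) = min s (uy - (a' + s)) := by
  omega

end Arith

theorem step {s t n m : ℕ} {ν μ : ℕ → ℕ} (hs : 1 ≤ s) (hts : 2 * s ≤ t)
    (hE : E t n m ν μ) (hν : ∀ x, ν x < n) (hμ : ∀ x, μ x < m)
    (hfin : (Set.range ν).Finite) {i : ℕ} (hi : i < n) :
    ∃ j < m, min s i = min s j ∧ min s (n - i) = min s (m - j) ∧
      ∀ y, min s (i - ν y) = min s (j - μ y) ∧ min s (ν y - i) = min s (μ y - j) := by
  classical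
  -- the left landmark a
  have hA : ((insert 0 {v | v ∈ Set.range ν ∧ v ≤ i}) : Set ℕ).Finite :=
    (hfin.subset (fun v hv => hv.1)).insert 0
  have h0A : 0 ∈ hA.toFinset := by simp
  obtain ⟨a, hadef⟩ : ∃ a, a = hA.toFinset.max' ⟨0, h0A⟩ := ⟨_, rfl⟩
  have haA : a ∈ hA.toFinset := hadef ▸ Finset.max'_mem _ _
  have haMem : a = 0 ∨ ((∃ z, ν z = a) ∧ a ≤ i) := by
    simpa using (Set.Finite.mem_toFinset hA).mp haA
  have hai : a ≤ i := by rcases haMem with h | ⟨_, h⟩ <;> omega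
  have hamax : ∀ y, ν y ≤ i → ν y ≤ a := fun y hy => hadef ▸
    Finset.le_max' _ _ ((Set.Finite.mem_toFinset hA).mpr (Or.inr ⟨⟨y, rfl⟩, hy⟩))
  obtain ⟨a', ha'⟩ : ∃ a', Corr n m ν μ a a' := by
    rcases haMem with h | ⟨⟨z, hz⟩, _⟩
    · exact ⟨0, Or.inl ⟨h, rfl⟩⟩
    · exact ⟨μ z, Or.inr (Or.inr ⟨z, hz.symm, rfl⟩)⟩
  -- the right landmark b
  have hB : ((insert n {v | v ∈ Set.range ν ∧ i ≤ v}) : Set ℕ).Finite :=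
    (hfin.subset (fun v hv => hv.1)).insert n
  have hnB : n ∈ hB.toFinset := by simp
  obtain ⟨b, hbdef⟩ : ∃ b, b = hB.toFinset.min' ⟨n, hnB⟩ := ⟨_, rfl⟩
  have hbB : b ∈ hB.toFinset := hbdef ▸ Finset.min'_mem _ _
  have hbMem : b = n ∨ ((∃ z, ν z = b) ∧ i ≤ b) := by
    simpa using (Set.Finite.mem_toFinset hB).mp hbB
  have hib : i ≤ b := by rcases hbMem with h | ⟨_, h⟩ <;> omega
  have hbn : b ≤ n := by
    rcases hbMem with h | ⟨⟨z, hz⟩, _⟩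
    · omega
    · rw [← hz]; exact (hν z).le
  have hbmin : ∀ y, i ≤ ν y → b ≤ ν y := fun y hy => hbdef ▸
    Finset.min'_le _ _ ((Set.Finite.mem_toFinset hB).mpr (Or.inr ⟨⟨y, rfl⟩, hy⟩))
  obtain ⟨b', hb'⟩ : ∃ b', Corr n m ν μ b b' := by
    rcases hbMem with h | ⟨⟨z, hz⟩, _⟩
    · exact ⟨m, Or.inr (Or.inl ⟨h, rfl⟩)⟩
    · exact ⟨μ z, Or.inr (Or.inr ⟨z, hz.symm, rfl⟩)⟩
  have hb'm : b' ≤ m := by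
    rcases hb' with ⟨_, rfl⟩ | ⟨_, rfl⟩ | ⟨z, _, rfl⟩
    · exact Nat.zero_le m
    · exact le_rfl
    · exact (hμ z).le
  have c0 : Corr n m ν μ 0 0 := Or.inl ⟨rfl, rfl⟩
  have cN : Corr n m ν μ n m := Or.inr (Or.inl ⟨rfl, rfl⟩)
  have cV : ∀ y, Corr n m ν μ (ν y) (μ y) := fun y => Or.inr (Or.inr ⟨y, rfl, rfl⟩)
  have minD : ∀ x y : ℕ, min t x = min t y → x = y ∨ (t ≤ x ∧ t ≤ y) := fun x y h => by omega
  have Dab := minD _ _ (pairGap hE hν hμ ha' hb')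
  have D0a := minD _ _ (by simpa using pairGap hE hν hμ c0 ha')
  have Dan := minD _ _ (pairGap hE hν hμ ha' cN)
  have D0b := minD _ _ (by simpa using pairGap hE hν hμ c0 hb')
  have Dbn := minD _ _ (pairGap hE hν hμ hb' cN)
  have hdis : ∀ y, ν y ≤ a ∨ b ≤ ν y := fun y => by
    rcases le_or_gt (ν y) i with h | h
    · exact Or.inl (hamax y h)
    · exact Or.inr (hbmin y h.le)
  by_cases hca : i - a < s
  · -- close to the left landmark
    obtain ⟨hjm, k1, k2⟩ := partA hs hts D0a Dan hai hi hca
    refine ⟨a' + (i - a), hjm, k1, k2, fun y => ?_⟩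
    have h1 := minD _ _ (pairGap hE hν hμ (cV y) ha')
    have h2 := minD _ _ (pairGap hE hν hμ ha' (cV y))
    rcases hdis y with h5 | h5
    · exact caseA_left hs hts h1 h2 h5 hai hca
    · exact caseA_right hs hts h1 h2 h5 hai hib hca
  · by_cases hcb : b - i < s
    · -- close to the right landmark
      obtain ⟨hbb', hjm, k1, k2⟩ := partB hs hts D0b Dbn hb'm hib hbn hi hcb
      have hja : s ≤ (b' - (b - i)) - a' := by
        rcases Dab with h | h <;> omega
      refine ⟨b' - (b - i), hjm, k1, k2, fun y => ?_⟩
      rcases hdis y with h5 | h5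
      · have h2 := minD _ _ (pairGap hE hν hμ ha' (cV y))
        exact caseB_left hs hts h2 h5 hai (by omega) hja
      · have h3 := minD _ _ (pairGap hE hν hμ (cV y) hb')
        have h4 := minD _ _ (pairGap hE hν hμ hb' (cV y))
        exact caseB_right hs hts h3 h4 h5 hib (by omega)
    · -- in the middle
      obtain ⟨hjb, hjm, k1, k2⟩ := partC hs hts Dab hb'm hai hib hbn (by omega) (by omega)
      refine ⟨a' + s, hjm, k1, k2, fun y => ?_⟩
      rcases hdis y with h5 | h5
      · have h2 := minD _ _ (pairGap hE hν hμ ha' (cV y))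
        exact caseC_left hs hts h2 h5 hai (by omega)
      · have h3 := minD _ _ (pairGap hE hν hμ (cV y) hb')
        have h4 := minD _ _ (pairGap hE hν hμ hb' (cV y))
        exact caseC_right hs hts h3 h4 h5 hib (by omega) hjb


lemma update_lt {ν : ℕ → ℕ} {n x i : ℕ} (hν : ∀ y, ν y < n) (hi : i < n) :
    ∀ y, Function.update ν x i y < n := fun y => by
  rcases eq_or_ne y x with rfl | h
  · simpa using hi
  · simpa [Function.update_of_ne h] using hν y

lemma update_finite {ν : ℕ → ℕ} (h : (Set.range ν).Finite) (x i : ℕ) :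
    (Set.range (Function.update ν x i)).Finite := by
  apply (h.insert i).subset
  rintro _ ⟨y, rfl⟩
  rcases eq_or_ne y x with rfl | hne
  · simp
  · simp only [Function.update_of_ne hne, Set.mem_insert_iff]
    exact Or.inr ⟨y, rfl⟩

lemma E_update {t n m x i j : ℕ} {ν μ : ℕ → ℕ} (hE : E t n m ν μ)
    (k1 : min t i = min t j) (k2 : min t (n - i) = min t (m - j))
    (k3 : ∀ y, min t (i - ν y) = min t (j - μ y) ∧ min t (ν y - i) = min t (μ y - j)) :
    E t n m (Function.update ν x i) (Function.update μ x j) := by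
  obtain ⟨h1, h2, h3, h4⟩ := hE
  refine ⟨h1, fun y => ?_, fun y => ?_, fun y z => ?_⟩
  · rcases eq_or_ne y x with rfl | h
    · simpa using k1
    · simpa [Function.update_of_ne h] using h2 y
  · rcases eq_or_ne y x with rfl | h
    · simpa using k2
    · simpa [Function.update_of_ne h] using h3 y
  · by_cases hy : y = x <;> by_cases hz : z = x
    · subst hy; subst hz; simp
    · subst hy
      simp only [Function.update_self, Function.update_of_ne hz]
      exact (k3 z).2
    · subst hz
      simp only [Function.update_self, Function.update_of_ne hy]
      exact (k3 y).1
    · simp only [Function.update_of_ne hy, Function.update_of_ne hz]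
      exact h4 y z

theorem sat_iff (φ : MFO Unit) : ∀ (n m : ℕ) (ν μ : ℕ → ℕ),
    E (2 ^ φ.qd) n m ν μ → (∀ x, ν x < n) → (∀ x, μ x < m) →
    (Set.range ν).Finite → (Set.range μ).Finite →
    (MFO.Sat (List.replicate n ()) ν φ ↔ MFO.Sat (List.replicate m ()) μ φ) := by
  induction φ with
  | char c x =>
    intro n m ν μ hE hν hμ _ _
    rcases c
    have h := hE.2.2.1 x
    simp only [MFO.qd, pow_zero] at h
    have key : ν x < n ↔ μ x < m := by omega
    simp only [MFO.Sat, List.getElem?_replicate]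
    by_cases hx : ν x < n
    · simp [hx, key.mp hx]
    · have hy : ¬ μ x < m := fun hm => hx (key.mpr hm)
      simp [hx, hy]
  | lt x y =>
    intro n m ν μ hE hν hμ _ _
    have h := hE.2.2.2 x y
    simp only [MFO.qd, pow_zero] at h
    simp only [MFO.Sat]
    omega
  | not φ ih =>
    intro n m ν μ hE hν hμ hfν hfμ
    simp only [MFO.qd] at hE
    simp only [MFO.Sat]
    rw [ih n m ν μ hE hν hμ hfν hfμ]
  | or φ ψ ihφ ihψ =>
    intro n m ν μ hE hν hμ hfν hfμ
    simp only [MFO.qd] at hE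
    simp only [MFO.Sat]
    rw [ihφ n m ν μ (hE.mono (Nat.pow_le_pow_right (by norm_num) (le_max_left _ _))) hν hμ hfν hfμ,
      ihψ n m ν μ (hE.mono (Nat.pow_le_pow_right (by norm_num) (le_max_right _ _))) hν hμ hfν hfμ]
  | ex x φ ih =>
    intro n m ν μ hE hν hμ hfν hfμ
    simp only [MFO.qd] at hE
    have hts : 2 * 2 ^ φ.qd ≤ 2 ^ (φ.qd + 1) := by rw [pow_succ]; omega
    have hs : 1 ≤ 2 ^ φ.qd := Nat.one_le_two_pow
    simp only [MFO.Sat, List.length_replicate]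
    constructor
    · rintro ⟨i, hi, hsat⟩
      obtain ⟨j, hj, k1, k2, k3⟩ := step hs hts hE hν hμ hfν hi
      refine ⟨j, hj, ?_⟩
      have hE' := E_update (x := x) (hE.mono (by rw [pow_succ]; omega)) k1 k2 k3
      exact (ih n m _ _ hE' (update_lt hν hi) (update_lt hμ hj)
        (update_finite hfν x i) (update_finite hfμ x j)).mp hsat
    · rintro ⟨j, hj, hsat⟩
      obtain ⟨i, hi, k1, k2, k3⟩ := step hs hts hE.symm hμ hν hfμ hj
      refine ⟨i, hi, ?_⟩
      have hE' := E_update (x := x) (hE.symm.mono (by rw [pow_succ]; omega)) k1 k2 k3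
      exact (ih n m _ _ hE'.symm (update_lt hν hi) (update_lt hμ hj)
        (update_finite hfν x i) (update_finite hfμ x j)).mpr hsat

lemma sat_const (φ : MFO Unit) {n m : ℕ} (hn : 2 ^ φ.qd ≤ n) (hm : 2 ^ φ.qd ≤ m) :
    (MFO.Sat (List.replicate n ()) (fun _ => 0) φ ↔
      MFO.Sat (List.replicate m ()) (fun _ => 0) φ) := by
  have hpos : 0 < 2 ^ φ.qd := Nat.two_pow_pos _
  have hrange : (Set.range (fun _ : ℕ => (0 : ℕ))).Finite := by
    rw [Set.range_const]; exact Set.finite_singleton 0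
  exact sat_iff φ n m _ _
    ⟨by omega, fun x => rfl, fun x => by simp only [Nat.sub_zero]; omega, fun x y => rfl⟩
    (fun x => by omega) (fun x => by omega) hrange hrange


/-! ### Formulas defining length constraints -/

def trueS : MFO Unit := .ex 0 (.char () 0)

def falseS : MFO Unit := .not trueS

def lower : ℕ → ℕ → MFO Unit
  | v, 0 => .or (.char () v) (.not (.char () v))
  | v, k + 1 => .ex (v + 1) (MFO.and (.lt (v + 1) v) (lower (v + 1) k))

def geF : ℕ → MFO Unit
  | 0 => trueS
  | k + 1 => .ex 0 (lower 0 k)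

def eqF (k : ℕ) : MFO Unit := MFO.and (geF k) (.not (geF (k + 1)))

def orF : List ℕ → MFO Unit
  | [] => falseS
  | k :: l => .or (eqF k) (orF l)

lemma fv_and (φ ψ : MFO Unit) : (MFO.and φ ψ).fv = φ.fv ∪ ψ.fv := rfl

lemma fv_trueS : trueS.fv = ∅ := by simp [trueS, MFO.fv]

lemma fv_lower : ∀ (k v : ℕ), (lower v k).fv ⊆ {v} := by
  intro k
  induction k with
  | zero => intro v; simp [lower, MFO.fv]
  | succ k ih =>
    intro v x hx
    simp only [lower, MFO.fv, fv_and, Finset.mem_sdiff, Finset.mem_union] at hx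
    obtain ⟨h1 | h2, h3⟩ := hx
    · simp only [MFO.fv, Finset.mem_insert, Finset.mem_singleton] at h1
      simp only [Finset.mem_singleton] at h3 ⊢
      tauto
    · have := ih (v + 1) h2
      simp only [Finset.mem_singleton] at this h3
      exact absurd this h3
  
lemma fv_geF (k : ℕ) : (geF k).fv = ∅ := by
  cases k with
  | zero => exact fv_trueS
  | succ k =>
    simp only [geF, MFO.fv]
    rw [Finset.eq_empty_iff_forall_notMem]
    intro x hx
    rw [Finset.mem_sdiff] at hx
    have := fv_lower k 0 hx.1
    simp only [Finset.mem_singleton] at this hx ⊢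
    exact hx.2 (by simp [this])

lemma fv_eqF (k : ℕ) : (eqF k).fv = ∅ := by
  have h : (eqF k).fv = (geF k).fv ∪ (geF (k + 1)).fv := rfl
  rw [h, fv_geF, fv_geF]
  simp

lemma fv_orF (l : List ℕ) : (orF l).fv = ∅ := by
  induction l with
  | nil =>
    have h : (orF []).fv = trueS.fv := rfl
    rw [h, fv_trueS]
  | cons k l ih =>
    have h : (orF (k :: l)).fv = (eqF k).fv ∪ (orF l).fv := rfl
    rw [h, fv_eqF, ih]
    simp

/-! ### Semantics of these formulas -/

lemma sat_not {α : Type} {w : List α} {ν : ℕ → ℕ} {φ : MFO α} :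
    MFO.Sat w ν (.not φ) ↔ ¬ MFO.Sat w ν φ := by
  simp only [MFO.Sat]

lemma sat_or {α : Type} {w : List α} {ν : ℕ → ℕ} {φ ψ : MFO α} :
    MFO.Sat w ν (.or φ ψ) ↔ MFO.Sat w ν φ ∨ MFO.Sat w ν ψ := by
  simp only [MFO.Sat]

lemma sat_and {w : List Unit} {ν : ℕ → ℕ} {φ ψ : MFO Unit} :
    MFO.Sat w ν (MFO.and φ ψ) ↔ MFO.Sat w ν φ ∧ MFO.Sat w ν ψ := by
  simp only [MFO.and, MFO.Sat]
  tauto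

lemma sat_trueS {n : ℕ} (hn : 0 < n) (ν : ℕ → ℕ) :
    MFO.Sat (List.replicate n ()) ν trueS := by
  refine ⟨0, by simpa using hn, ?_⟩
  simp [MFO.Sat, List.getElem?_replicate, hn]

lemma sat_lower {n : ℕ} : ∀ (k v : ℕ) (ν : ℕ → ℕ), ν v < n →
    (MFO.Sat (List.replicate n ()) ν (lower v k) ↔ k ≤ ν v) := by
  intro k
  induction k with
  | zero =>
    intro v ν _
    simp only [lower, MFO.Sat, Nat.zero_le, iff_true]
    exact em _
  | succ k ih =>
    intro v ν hv
    simp only [lower, MFO.Sat, MFO.and, List.length_replicate, not_or, not_not]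
    constructor
    · rintro ⟨i, hi, h1, h2⟩
      have hne : v ≠ v + 1 := by omega
      rw [Function.update_self, Function.update_of_ne hne] at h1
      have := (ih (v + 1) _ (by rwa [Function.update_self])).mp h2
      rw [Function.update_self] at this
      omega
    · intro hk
      refine ⟨ν v - 1, by omega, ?_, ?_⟩
      · have hne : v ≠ v + 1 := by omega
        rw [Function.update_self, Function.update_of_ne hne]
        omega
      · rw [ih (v + 1) _ (by rw [Function.update_self]; omega), Function.update_self]
        omega

lemma sat_geF {n : ℕ} (hn : 0 < n) (k : ℕ) (ν : ℕ → ℕ) :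
    MFO.Sat (List.replicate n ()) ν (geF k) ↔ k ≤ n := by
  cases k with
  | zero => simpa [geF] using sat_trueS hn ν
  | succ k =>
    simp only [geF, MFO.Sat, List.length_replicate]
    constructor
    · rintro ⟨i, hi, hs⟩
      have := (sat_lower k 0 _ (by rwa [Function.update_self])).mp hs
      rw [Function.update_self] at this
      omega
    · intro hk
      refine ⟨k, by omega, ?_⟩
      rw [sat_lower k 0 _ (by rw [Function.update_self]; omega), Function.update_self]

lemma sat_eqF {n : ℕ} (hn : 0 < n) (k : ℕ) (ν : ℕ → ℕ) :
    MFO.Sat (List.replicate n ()) ν (eqF k) ↔ n = k := by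
  have h : MFO.Sat (List.replicate n ()) ν (eqF k) ↔
      MFO.Sat (List.replicate n ()) ν (geF k) ∧
        ¬ MFO.Sat (List.replicate n ()) ν (geF (k + 1)) := by
    rw [eqF, sat_and, sat_not]
  rw [h, sat_geF hn, sat_geF hn]
  omega

lemma sat_orF {n : ℕ} (hn : 0 < n) (l : List ℕ) (ν : ℕ → ℕ) :
    MFO.Sat (List.replicate n ()) ν (orF l) ↔ n ∈ l := by
  induction l with
  | nil =>
    simp only [List.not_mem_nil, iff_false]
    intro h
    exact sat_not.mp h (sat_trueS hn ν)
  | cons k l ih =>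
    have h : MFO.Sat (List.replicate n ()) ν (orF (k :: l)) ↔
        MFO.Sat (List.replicate n ()) ν (eqF k) ∨
          MFO.Sat (List.replicate n ()) ν (orF l) := sat_or
    rw [h, sat_eqF hn, ih, List.mem_cons]

lemma unit_eq_replicate (w : List Unit) : w = List.replicate w.length () := by
  induction w with
  | nil => rfl
  | cons a w ih =>
    rcases a
    rw [List.length_cons, List.replicate_succ, ← ih]

lemma unit_eq_of_length {w u : List Unit} (h : w.length = u.length) : w = u := by
  rw [unit_eq_replicate w, unit_eq_replicate u, h]

end MFOUnit

open MFOUnit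

/-- A language over the one-letter alphabet `{a}` (modeled by
`Unit`) is MFO-definable iff it is finite or co-finite (its complement within
`{a}⁺` is finite). -/
theorem mfo_definable_iff_finite_or_cofinite (L : Set (List Unit))
    (hL : L ⊆ {w : List Unit | w ≠ []}) :
    MFO.Definable L ↔ (L.Finite ∨ ({w : List Unit | w ≠ []} \ L).Finite) := by
  classical
  constructor
  · rintro ⟨φ, -, rfl⟩
    by_cases h : List.replicate (2 ^ φ.qd) () ∈ MFO.Lang φ
    · right
      apply (List.finite_length_lt Unit (2 ^ φ.qd)).subset
      rintro w ⟨hw, hnot⟩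
      simp only [Set.mem_setOf_eq] at hw hnot ⊢
      by_contra hlen
      push_neg at hlen
      apply hnot
      refine ⟨hw, ?_⟩
      have hs := (sat_const φ le_rfl hlen).mp h.2
      rw [unit_eq_replicate w]
      exact hs
    · left
      apply (List.finite_length_lt Unit (2 ^ φ.qd)).subset
      intro w hw
      simp only [Set.mem_setOf_eq]
      by_contra hlen
      push_neg at hlen
      apply h
      have hs : MFO.Sat (List.replicate w.length ()) (fun _ => 0) φ := by
        rw [← unit_eq_replicate w]; exact hw.2
      exact ⟨List.ne_nil_of_length_pos (by simpa using Nat.two_pow_pos φ.qd),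
        (sat_const φ hlen le_rfl).mp hs⟩
  · rintro (hfin | hcof)
    · -- finite case
      refine ⟨orF (hfin.image List.length).toFinset.toList, fv_orF _, ?_⟩
      ext w
      simp only [MFO.Lang, Set.mem_setOf_eq]
      constructor
      · intro hw
        have hne : w ≠ [] := hL hw
        have hpos : 0 < w.length := List.length_pos_iff.mpr hne
        refine ⟨hne, ?_⟩
        rw [unit_eq_replicate w, sat_orF hpos]
        simp only [Finset.mem_toList, Set.Finite.mem_toFinset, Set.mem_image]
        exact ⟨w, hw, rfl⟩
      · rintro ⟨hne, hsat⟩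
        have hpos : 0 < w.length := List.length_pos_iff.mpr hne
        have hsat' : MFO.Sat (List.replicate w.length ()) (fun _ => 0)
            (orF (hfin.image List.length).toFinset.toList) := by
          rw [← unit_eq_replicate w]; exact hsat
        rw [sat_orF hpos] at hsat'
        simp only [Finset.mem_toList, Set.Finite.mem_toFinset, Set.mem_image] at hsat'
        obtain ⟨u, hu, hlen⟩ := hsat'
        rw [unit_eq_of_length hlen.symm]
        exact hu
    · -- co-finite case
      obtain ⟨N, hN⟩ := (hcof.image List.length).bddAbove
      have hTfin : (L ∩ {w : List Unit | w.length ≤ N}).Finite :=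
        (List.finite_length_lt Unit (N + 1)).subset (fun w hw => by
          simpa using Nat.lt_succ_of_le hw.2)
      refine ⟨.or (geF (N + 1)) (orF (hTfin.image List.length).toFinset.toList), ?_, ?_⟩
      · have h : (MFO.or (geF (N + 1))
            (orF (hTfin.image List.length).toFinset.toList)).fv =
            (geF (N + 1)).fv ∪ (orF (hTfin.image List.length).toFinset.toList).fv := rfl
        rw [h, fv_geF, fv_orF]
        simp
      · ext w
        simp only [MFO.Lang, Set.mem_setOf_eq]
        constructor
        · intro hw
          have hne : w ≠ [] := hL hw
          have hpos : 0 < w.length := List.length_pos_iff.mpr hne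
          refine ⟨hne, ?_⟩
          rw [unit_eq_replicate w, sat_or]
          by_cases hlen : N + 1 ≤ w.length
          · left
            rw [sat_geF hpos]
            exact hlen
          · right
            rw [sat_orF hpos]
            simp only [Finset.mem_toList, Set.Finite.mem_toFinset, Set.mem_image]
            exact ⟨w, ⟨hw, by simp only [Set.mem_setOf_eq]; omega⟩, rfl⟩
        · rintro ⟨hne, hsat⟩
          have hpos : 0 < w.length := List.length_pos_iff.mpr hne
          have hsat' : MFO.Sat (List.replicate w.length ()) (fun _ => 0)
              (.or (geF (N + 1)) (orF (hTfin.image List.length).toFinset.toList)) := by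
            rw [← unit_eq_replicate w]; exact hsat
          rw [sat_or] at hsat'
          rcases hsat' with hx | hx
          · rw [sat_geF hpos] at hx
            by_contra hwL
            have hmem : w.length ∈ List.length '' ({w : List Unit | w ≠ []} \ L) :=
              ⟨w, ⟨hne, hwL⟩, rfl⟩
            have := hN hmem
            omega
          · rw [sat_orF hpos] at hx
            simp only [Finset.mem_toList, Set.Finite.mem_toFinset, Set.mem_image] at hx
            obtain ⟨u, ⟨huL, _⟩, hlen⟩ := hx
            rw [unit_eq_of_length hlen.symm]
            exact huL
end

section
/- For every MFO sentence φ over a finite alphabet Σ there exists a finite-state automaton A over Σ such that L(φ) = L(A); in particular, every MFO-definable language is regular. -/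
/-! ### Auxiliary development: Büchi–Elgot–Trakhtenbrot -/

namespace MFOProof
open MFO

variable {γ δ : Type}

/-- A language is regular: recognized by a DFA with finitely many states. -/
def Reg (L : Set (List γ)) : Prop :=
  ∃ (σ : Type) (_ : Fintype σ) (A : DFA γ σ), L = A.accepts

lemma reg_univ : Reg (Set.univ : Set (List γ)) := by
  refine ⟨Unit, inferInstance, ⟨fun _ _ => (), (), Set.univ⟩, ?_⟩
  ext w; simp [DFA.mem_accepts]; trivial

lemma Reg.compl {L : Set (List γ)} (h : Reg L) : Reg Lᶜ := by
  obtain ⟨σ, i, A, rfl⟩ := h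
  refine ⟨σ, i, ⟨A.step, A.start, A.acceptᶜ⟩, ?_⟩
  ext w
  show ¬ (A.eval w ∈ A.accept) ↔ DFA.evalFrom ⟨A.step, A.start, A.acceptᶜ⟩ A.start w ∈ A.acceptᶜ
  rfl

def prodDFA {σ τ : Type} (A : DFA γ σ) (B : DFA γ τ) : DFA γ (σ × τ) :=
  ⟨fun p a => (A.step p.1 a, B.step p.2 a), (A.start, B.start),
      {p | p.1 ∈ A.accept ∧ p.2 ∈ B.accept}⟩

lemma evalFrom_prod {σ τ : Type} (A : DFA γ σ) (B : DFA γ τ) (s : σ) (t : τ) (w : List γ) :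
    (prodDFA A B).evalFrom (s, t) w = (A.evalFrom s w, B.evalFrom t w) := by
  induction w generalizing s t with
  | nil => rfl
  | cons a w ih => simpa [DFA.evalFrom, prodDFA] using ih _ _

lemma Reg.inter {L M : Set (List γ)} (hL : Reg L) (hM : Reg M) : Reg (L ∩ M) := by
  obtain ⟨σ, i, A, rfl⟩ := hL
  obtain ⟨τ, j, B, rfl⟩ := hM
  refine ⟨σ × τ, inferInstance, prodDFA A B, ?_⟩
  ext w
  show A.eval w ∈ A.accept ∧ B.eval w ∈ B.accept ↔ (prodDFA A B).eval w ∈ (prodDFA A B).accept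
  show _ ↔ (prodDFA A B).evalFrom (A.start, B.start) w ∈ _
  rw [evalFrom_prod]
  rfl

lemma Reg.union {L M : Set (List γ)} (hL : Reg L) (hM : Reg M) : Reg (L ∪ M) := by
  have := (hL.compl.inter hM.compl).compl
  rwa [Set.compl_inter, compl_compl, compl_compl] at this

lemma Reg.preimage {L : Set (List γ)} (f : δ → γ) (h : Reg L) :
    Reg {w : List δ | w.map f ∈ L} := by
  obtain ⟨σ, i, A, rfl⟩ := h
  refine ⟨σ, i, ⟨fun q b => A.step q (f b), A.start, A.accept⟩, ?_⟩
  ext w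
  simp only [DFA.mem_accepts, Set.mem_setOf_eq]
  show A.evalFrom A.start (List.map f w) ∈ A.accept ↔
    DFA.evalFrom _ _ w ∈ A.accept
  unfold DFA.evalFrom
  rw [List.foldl_map]

def imgNFA {σ : Type} (A : DFA δ σ) (f : δ → γ) : NFA γ σ :=
  ⟨fun q a => {q' | ∃ b, f b = a ∧ A.step q b = q'}, {A.start}, A.accept⟩

lemma imgNFA_evalFrom {σ : Type} (A : DFA δ σ) (f : δ → γ) (w : List γ) (S : Set σ) :
    (imgNFA A f).evalFrom S w =
      {q | ∃ u : List δ, u.map f = w ∧ ∃ s ∈ S, A.evalFrom s u = q} := by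
  induction w generalizing S with
  | nil =>
    ext q
    simp only [NFA.evalFrom_nil, Set.mem_setOf_eq]
    constructor
    · intro hq
      exact ⟨[], rfl, q, hq, rfl⟩
    · rintro ⟨u, hu, s, hs, rfl⟩
      rw [List.map_eq_nil_iff] at hu
      subst hu; exact hs
  | cons a w ih =>
    show (imgNFA A f).evalFrom ((imgNFA A f).stepSet S a) w = _
    rw [ih]
    ext q
    simp only [Set.mem_setOf_eq, NFA.mem_stepSet]
    constructor
    · rintro ⟨u, hu, s, ⟨t, ht, hb⟩, rfl⟩
      obtain ⟨b, hb1, hb2⟩ := hb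
      exact ⟨b :: u, by simp [hb1, hu], t, ht, by simp [DFA.evalFrom, hb2]⟩
    · rintro ⟨u, hu, s, hs, rfl⟩
      cases u with
      | nil => simp at hu
      | cons b u =>
        simp only [List.map_cons, List.cons.injEq] at hu
        exact ⟨u, hu.2, A.step s b, ⟨s, hs, b, hu.1, rfl⟩,
          by simp [DFA.evalFrom]⟩

lemma Reg.image {L : Set (List δ)} (f : δ → γ) (h : Reg L) :
    Reg (List.map f '' L) := by
  classical
  obtain ⟨σ, i, A, rfl⟩ := h
  refine ⟨Set σ, by exact Fintype.ofFinite _, (imgNFA A f).toDFA, ?_⟩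
  rw [NFA.toDFA_correct]
  ext w
  show w ∈ List.map f '' (A.accepts : Set (List δ)) ↔ ∃ S ∈ (imgNFA A f).accept, S ∈ (imgNFA A f).evalFrom {A.start} w
  rw [imgNFA_evalFrom]
  constructor
  · rintro ⟨u, hu, rfl⟩
    exact ⟨A.evalFrom A.start u, by exact hu,
      u, rfl, A.start, rfl, rfl⟩
  · rintro ⟨q, hq, u, hu, s, hs, rfl⟩
    have : s = A.start := hs
    subst this
    exact ⟨u, by exact hq, hu⟩

/-- DFA for "some letter satisfies p". -/
lemma reg_any (p : γ → Bool) : Reg {w : List γ | ∃ b ∈ w, p b = true} := by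
  refine ⟨Bool, inferInstance, ⟨fun s b => s || p b, false, {true}⟩, ?_⟩
  have key : ∀ (w : List γ) (s : Bool),
      DFA.evalFrom ⟨fun s b => s || p b, false, ({true} : Set Bool)⟩ s w
        = (s || w.any p) := by
    intro w
    induction w with
    | nil => intro s; simp [DFA.evalFrom]
    | cons b w ih =>
      intro s
      show DFA.evalFrom _ (s || p b) w = _
      rw [ih]
      simp [Bool.or_assoc]
  ext w
  refine Iff.trans ?_ (Iff.symm (DFA.mem_accepts _))
  show _ ↔ DFA.evalFrom _ false w ∈ _
  rw [key]
  simp [List.any_eq_true]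

/-- helper for the "some p-letter strictly before a q-letter" pattern. -/
def paux (p q : γ → Bool) : Bool → List γ → Bool
  | _, [] => false
  | sx, b :: w => (sx && q b) || paux p q (sx || p b) w

lemma paux_iff (p q : γ → Bool) : ∀ (w : List γ) (sx : Bool),
    paux p q sx w = true ↔
      ∃ j, ∃ hj : j < w.length, q w[j] = true ∧
        (sx = true ∨ ∃ i, ∃ hi : i < j, p (w[i]'(by omega)) = true) := by
  intro w
  induction w with
  | nil => intro sx; simp [paux]
  | cons b w ih =>
    intro sx
    show ((sx && q b) || paux p q (sx || p b) w) = true ↔ _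
    rw [Bool.or_eq_true, Bool.and_eq_true, ih]
    constructor
    · rintro (⟨h1, h2⟩ | ⟨j, hj, hq, hrest⟩)
      · exact ⟨0, by simp, by simpa using h2, Or.inl h1⟩
      · refine ⟨j + 1, by simpa using Nat.succ_lt_succ hj, by simpa using hq, ?_⟩
        rcases hrest with h | ⟨i, hi, hp⟩
        · rcases (Bool.or_eq_true _ _).mp h with h | h
          · exact Or.inl h
          · exact Or.inr ⟨0, Nat.succ_pos _, by simpa using h⟩
        · exact Or.inr ⟨i + 1, Nat.succ_lt_succ hi, by simpa using hp⟩
    · rintro ⟨j, hj, hq, hrest⟩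
      cases j with
      | zero =>
        rcases hrest with h | ⟨i, hi, _⟩
        · exact Or.inl ⟨h, by simpa using hq⟩
        · omega
      | succ j =>
        refine Or.inr ⟨j, by simpa using hj, by simpa using hq, ?_⟩
        rcases hrest with h | ⟨i, hi, hp⟩
        · exact Or.inl (by simp [h])
        · cases i with
          | zero => exact Or.inl (by simp [show p b = true by simpa using hp])
          | succ i => exact Or.inr ⟨i, by omega, by simpa using hp⟩

/-- DFA for "∃ i < j, p w[i] ∧ q w[j]". -/
lemma reg_pair (p q : γ → Bool) :
    Reg {w : List γ | ∃ j, ∃ hj : j < w.length, q w[j] = true ∧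
        ∃ i, ∃ hi : i < j, p (w[i]'(by omega)) = true} := by
  refine ⟨Bool × Bool, inferInstance,
    ⟨fun s b => (s.1 || p b, s.2 || (s.1 && q b)), (false, false), {s | s.2 = true}⟩, ?_⟩
  have key : ∀ (w : List γ) (sx d : Bool),
      DFA.evalFrom ⟨fun s b => (s.1 || p b, s.2 || (s.1 && q b)), (false, false),
          {s : Bool × Bool | s.2 = true}⟩ (sx, d) w
        = (sx || w.any p, d || paux p q sx w) := by
    intro w
    induction w with
    | nil => intro sx d; simp [DFA.evalFrom, paux]
    | cons b w ih =>
      intro sx d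
      show DFA.evalFrom _ (sx || p b, d || (sx && q b)) w = _
      rw [ih]
      simp [paux, Bool.or_assoc]
  ext w
  refine Iff.trans ?_ (Iff.symm (DFA.mem_accepts _))
  show _ ↔ DFA.evalFrom _ (false, false) w ∈ _
  rw [key]
  show _ ↔ (false || paux p q false w) = true
  rw [Bool.false_or, paux_iff]
  constructor
  · rintro ⟨j, hj, hq, i, hi, hp⟩
    exact ⟨j, hj, hq, Or.inr ⟨i, hi, hp⟩⟩
  · rintro ⟨j, hj, hq, h | ⟨i, hi, hp⟩⟩
    · simp at h
    · exact ⟨j, hj, hq, i, hi, hp⟩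

/-- DFA for "w = b :: t with p b and all of t satisfying q". -/
lemma reg_headTail (p q : γ → Bool) :
    Reg {w : List γ | ∃ b t, w = b :: t ∧ p b = true ∧ ∀ c ∈ t, q c = true} := by
  classical
  refine ⟨Option Bool, inferInstance,
    ⟨fun s b => match s with
      | some false => if p b then some true else none
      | some true => if q b then some true else none
      | none => none, some false, {some true}⟩, ?_⟩
  set A : DFA γ (Option Bool) :=
    ⟨fun s b => match s with
      | some false => if p b then some true else none
      | some true => if q b then some true else none
      | none => none, some false, {some true}⟩ with hA
  have keyNone : ∀ w : List γ, A.evalFrom none w = none := by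
    intro w; induction w with
    | nil => rfl
    | cons b w ih => exact ih
  have keyTrue : ∀ w : List γ, A.evalFrom (some true) w = some true ↔ ∀ c ∈ w, q c = true := by
    intro w; induction w with
    | nil => simp [DFA.evalFrom]
    | cons b w ih =>
      show A.evalFrom (if q b then some true else none) w = some true ↔ _
      by_cases h : q b = true
      · rw [if_pos h, ih]
        simp [h]
      · rw [if_neg h, keyNone]
        constructor
        · intro hh; exact absurd hh (by simp)
        · intro hh; exact absurd (hh b (by simp)) h
  ext w
  refine Iff.trans ?_ (Iff.symm (DFA.mem_accepts _))
  show _ ↔ A.eval w ∈ A.accept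
  constructor
  · rintro ⟨b, t, rfl, hp, hq⟩
    show A.evalFrom (A.step (some false) b) t ∈ _
    have : A.step (some false) b = some true := by simp [hA, hp]
    rw [this]
    exact (keyTrue t).mpr hq
  · intro h
    cases w with
    | nil => simp [DFA.eval, DFA.evalFrom, hA] at h
    | cons b t =>
      have hstep : A.eval (b :: t) = A.evalFrom (A.step (some false) b) t := rfl
      by_cases hp : p b = true
      · have : A.step (some false) b = some true := by simp [hA, hp]
        rw [hstep, this] at h
        exact ⟨b, t, rfl, hp, (keyTrue t).mp h⟩
      · have : A.step (some false) b = none := by simp [hA, hp]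
        rw [hstep, this, keyNone] at h
        simp [hA] at h

/-- finite intersections -/
lemma reg_forallLt (k : ℕ) (F : ℕ → Set (List γ)) (h : ∀ i, Reg (F i)) :
    Reg {w : List γ | ∀ x < k, w ∈ F x} := by
  induction k with
  | zero =>
    have : {w : List γ | ∀ x < 0, w ∈ F x} = Set.univ := by
      ext w; simp
    rw [this]
    exact reg_univ
  | succ k ih =>
    have : {w : List γ | ∀ x < k + 1, w ∈ F x} = {w : List γ | ∀ x < k, w ∈ F x} ∩ F k := by
      ext w
      simp only [Set.mem_inter_iff, Set.mem_setOf_eq]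
      constructor
      · exact fun h2 => ⟨fun x hx => h2 x (by omega), h2 k (by omega)⟩
      · rintro ⟨h1, h2⟩ x hx
        rcases Nat.lt_succ_iff_lt_or_eq.mp hx with h | rfl
        · exact h1 x h
        · exact h2
    rw [this]
    exact ih.inter (h k)

/-! ### MFO-specific part -/

def maxv {α : Type} : MFO α → ℕ
  | .char _ x => x + 1
  | .lt x y => max (x + 1) (y + 1)
  | .not φ => maxv φ
  | .or φ ψ => max (maxv φ) (maxv ψ)
  | .ex x φ => max (x + 1) (maxv φ)

lemma fv_lt_maxv {α : Type} : ∀ φ : MFO α, ∀ x ∈ fv φ, x < maxv φ := by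
  intro φ
  induction φ with
  | char a x => intro y hy; simp [fv] at hy; subst hy; simp [maxv]
  | lt x y => intro z hz; simp [fv] at hz; rcases hz with rfl | rfl <;> simp [maxv]
  | not φ ih => exact ih
  | or φ ψ ih1 ih2 =>
    intro z hz; simp [fv] at hz
    rcases hz with h | h
    · exact lt_of_lt_of_le (ih1 z h) (le_max_left _ _)
    · exact lt_of_lt_of_le (ih2 z h) (le_max_right _ _)
  | ex x φ ih =>
    intro z hz; simp [fv] at hz
    exact lt_of_lt_of_le (ih z hz.1) (le_max_right _ _)

lemma sat_congr {α : Type} (w : List α) :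
    ∀ (φ : MFO α) (ν ν' : ℕ → ℕ), (∀ x ∈ fv φ, ν x = ν' x) → (Sat w ν φ ↔ Sat w ν' φ) := by
  intro φ
  induction φ with
  | char a x => intro ν ν' h; simp [Sat, h x (by simp [fv])]
  | lt x y =>
    intro ν ν' h
    simp [Sat, h x (by simp [fv]), h y (by simp [fv])]
  | not φ ih => intro ν ν' h; simp only [Sat]; rw [ih ν ν' h]
  | or φ ψ ih1 ih2 =>
    intro ν ν' h
    simp only [Sat]
    rw [ih1 ν ν' fun x hx => h x (by simp [fv, hx]),
        ih2 ν ν' fun x hx => h x (by simp [fv, hx])]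
  | ex x φ ih =>
    intro ν ν' h
    simp only [Sat]
    refine exists_congr fun i => and_congr_right fun _ => ?_
    apply ih
    intro y hy
    by_cases hyx : y = x
    · subst hyx; simp
    · rw [Function.update_of_ne hyx, Function.update_of_ne hyx]
      exact h y (by simp [fv, hy, hyx])

section Enc

variable {α : Type} (n : ℕ)

/-- the bit of variable `x` in an extended letter. -/
def bitf (x : ℕ) (b : α × (Fin n → Bool)) : Bool :=
  if h : x < n then b.2 ⟨x, h⟩ else false

/-- decoded assignment: position of the (unique) mark of variable `x`. -/
def decode (u : List (α × (Fin n → Bool))) (x : ℕ) : ℕ :=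
  u.findIdx (bitf n x)

/-- variable `x` is marked at exactly one position. -/
def ValidAt (u : List (α × (Fin n → Bool))) (x : ℕ) : Prop :=
  ∃ i, ∃ hi : i < u.length, bitf n x u[i] = true ∧
    ∀ j, ∀ hj : j < u.length, bitf n x u[j] = true → j = i

def Valid (u : List (α × (Fin n → Bool))) : Prop :=
  ∀ x < n, ValidAt n u x

def Good (φ : MFO α) : Set (List (α × (Fin n → Bool))) :=
  {u | Valid n u ∧ Sat (u.map Prod.fst) (decode n u) φ}

lemma decode_eq {u : List (α × (Fin n → Bool))} {x i : ℕ} (hi : i < u.length)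
    (hb : bitf n x u[i] = true)
    (huniq : ∀ j, ∀ hj : j < u.length, bitf n x u[j] = true → j = i) :
    decode n u x = i := by
  rw [decode, List.findIdx_eq hi]
  refine ⟨hb, fun j hj => ?_⟩
  by_contra h
  rw [Bool.not_eq_false] at h
  exact absurd (huniq j (by omega) h) (by omega)

lemma validAt_decode {u : List (α × (Fin n → Bool))} {x : ℕ} (h : ValidAt n u x) :
    ∃ hd : decode n u x < u.length, bitf n x u[decode n u x] = true ∧
      ∀ j, ∀ hj : j < u.length, bitf n x u[j] = true → j = decode n u x := by
  obtain ⟨i, hi, hb, huniq⟩ := h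
  have hd := decode_eq n hi hb huniq
  rw [hd]
  exact ⟨hi, hb, huniq⟩

lemma validAt_transfer {u v : List (α × (Fin n → Bool))} {y : ℕ}
    (hlen : v.length = u.length)
    (hbit : ∀ j, ∀ hj : j < u.length, bitf n y (v[j]'(by omega)) = bitf n y u[j])
    (h : ValidAt n u y) : ValidAt n v y := by
  obtain ⟨i, hi, hb, huniq⟩ := h
  exact ⟨i, by omega, by rw [hbit i hi]; exact hb,
    fun j hj hbj => huniq j (by omega) (by rw [← hbit j (by omega)]; exact hbj)⟩

lemma decode_transfer {u v : List (α × (Fin n → Bool))} {y : ℕ}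
    (hlen : v.length = u.length)
    (hbit : ∀ j, ∀ hj : j < u.length, bitf n y (v[j]'(by omega)) = bitf n y u[j])
    (h : ValidAt n u y) : decode n v y = decode n u y := by
  obtain ⟨hd, hb, huniq⟩ := validAt_decode n h
  exact decode_eq n (i := decode n u y) (by omega) (by rw [hbit _ hd]; exact hb)
    (fun j hj hbj => huniq j (by omega) (by rw [← hbit j (by omega)]; exact hbj))

lemma reg_validAt (x : ℕ) : Reg {u : List (α × (Fin n → Bool)) | ValidAt n u x} := by
  have : {u : List (α × (Fin n → Bool)) | ValidAt n u x} =
      {u | ∃ b ∈ u, bitf n x b = true} ∩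
      {u : List (α × (Fin n → Bool)) | ∃ j, ∃ hj : j < u.length, bitf n x u[j] = true ∧
        ∃ i, ∃ hi : i < j, bitf n x (u[i]'(by omega)) = true}ᶜ := by
    ext u
    simp only [Set.mem_inter_iff, Set.mem_setOf_eq, Set.mem_compl_iff]
    constructor
    · rintro ⟨i, hi, hb, huniq⟩
      refine ⟨⟨u[i], List.getElem_mem hi, hb⟩, ?_⟩
      rintro ⟨j, hj, hqj, k, hk, hqk⟩
      have h1 := huniq j hj hqj
      have h2 := huniq k (by omega) hqk
      omega
    · rintro ⟨⟨b, hb, hpb⟩, hno⟩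
      obtain ⟨i, hi, rfl⟩ := List.mem_iff_getElem.mp hb
      refine ⟨i, hi, hpb, fun j hj hbj => ?_⟩
      by_contra hne
      rcases Nat.lt_or_ge j i with h | h
      · exact hno ⟨i, hi, hpb, j, h, hbj⟩
      · exact hno ⟨j, hj, hbj, i, by omega, hpb⟩
  rw [this]
  exact (reg_any _).inter (reg_pair _ _).compl

lemma reg_valid : Reg {u : List (α × (Fin n → Bool)) | Valid n u} := by
  have : {u : List (α × (Fin n → Bool)) | Valid n u} =
      {u | ∀ x < n, u ∈ {u : List (α × (Fin n → Bool)) | ValidAt n u x}} := rfl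
  rw [this]
  exact reg_forallLt n _ fun x => reg_validAt n x

end Enc

end MFOProof

namespace MFOProof
open MFO

section Main

variable {α : Type}

lemma good_char (n : ℕ) (a : α) (x : ℕ) (hx : x < n) :
    Good n (MFO.char a x) =
      {u : List (α × (Fin n → Bool)) | Valid n u} ∩
      {u | ∃ b ∈ u, (bitf n x b && @decide (b.1 = a) (Classical.propDecidable _)) = true} := by
  ext u
  simp only [Good, Set.mem_inter_iff, Set.mem_setOf_eq, Bool.and_eq_true, decide_eq_true_iff]
  refine and_congr_right fun hval => ?_
  obtain ⟨hd, hb, huniq⟩ := validAt_decode n (hval x hx)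
  simp only [Sat]
  rw [List.getElem?_eq_getElem (by simpa using hd), List.getElem_map]
  constructor
  · intro h
    exact ⟨u[decode n u x], List.getElem_mem hd, hb, by simpa using h⟩
  · rintro ⟨b, hbmem, hbit, hfst⟩
    obtain ⟨j, hj, rfl⟩ := List.mem_iff_getElem.mp hbmem
    have := huniq j hj hbit
    subst this
    simp [hfst]

lemma good_lt (n : ℕ) (x y : ℕ) (hx : x < n) (hy : y < n) :
    Good n (MFO.lt x y) =
      {u : List (α × (Fin n → Bool)) | Valid n u} ∩
      {u : List (α × (Fin n → Bool)) | ∃ j, ∃ hj : j < u.length, bitf n y u[j] = true ∧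
        ∃ i, ∃ hi : i < j, bitf n x (u[i]'(by omega)) = true} := by
  ext u
  simp only [Good, Set.mem_inter_iff, Set.mem_setOf_eq]
  refine and_congr_right fun hval => ?_
  obtain ⟨hdx, hbx, hux⟩ := validAt_decode n (hval x hx)
  obtain ⟨hdy, hby, huy⟩ := validAt_decode n (hval y hy)
  simp only [Sat]
  constructor
  · intro h
    exact ⟨decode n u y, hdy, hby, decode n u x, h, hbx⟩
  · rintro ⟨j, hj, hbj, i, hij, hbi⟩
    have h1 := huy j hj hbj
    have h2 := hux i (by omega) hbi
    omega

lemma good_not (n : ℕ) (φ : MFO α) :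
    Good n (MFO.not φ) =
      {u : List (α × (Fin n → Bool)) | Valid n u} ∩ (Good n φ)ᶜ := by
  ext u
  simp only [Good, Set.mem_inter_iff, Set.mem_setOf_eq, Set.mem_compl_iff, Sat]
  tauto

lemma good_or (n : ℕ) (φ ψ : MFO α) :
    Good n (MFO.or φ ψ) = Good n φ ∪ Good n ψ := by
  ext u
  simp only [Good, Set.mem_union, Set.mem_setOf_eq, Sat]
  tauto

end Main


def er (n x : ℕ) (hx : x < n) : α × (Fin n → Bool) → α × (Fin n → Bool) :=
  fun b => (b.1, Function.update b.2 ⟨x, hx⟩ false)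

lemma bitf_er_ne {n x : ℕ} (hx : x < n) {y : ℕ} (hyx : y ≠ x) (b : α × (Fin n → Bool)) :
    bitf n y (er n x hx b) = bitf n y b := by
  unfold bitf er
  by_cases hy : y < n
  · rw [dif_pos hy, dif_pos hy]
    exact Function.update_of_ne (by simp [Fin.ext_iff, hyx]) _ _
  · rw [dif_neg hy, dif_neg hy]

lemma good_ex (n : ℕ) (x : ℕ) (φ : MFO α) (hx : x < n) (hφ : maxv φ ≤ n) :
    Good n (MFO.ex x φ) =
      {u : List (α × (Fin n → Bool)) | Valid n u} ∩
      {u | u.map (er n x hx) ∈ (List.map (er n x hx) '' Good n φ)} := by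
  have hfvn : ∀ y ∈ fv φ, y < n := fun y hy => lt_of_lt_of_le (fv_lt_maxv φ y hy) hφ
  ext u
  simp only [Good, Set.mem_inter_iff, Set.mem_setOf_eq]
  refine and_congr_right fun hval => ?_
  constructor
  · -- Sat (ex x φ) → projection membership
    rintro h
    simp only [Sat, List.length_map] at h
    obtain ⟨i, hi, hsat⟩ := h
    set v : List (α × (Fin n → Bool)) :=
      u.mapIdx (fun j b => (b.1, Function.update b.2 ⟨x, hx⟩ (decide (j = i)))) with hv
    have hvlen : v.length = u.length := by simp [hv]
    have hvget : ∀ j (hj : j < u.length),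
        v[j]'(by omega) = (u[j].1, Function.update u[j].2 ⟨x, hx⟩ (decide (j = i))) := by
      intro j hj
      simp [hv]
    have hbx : ∀ j (hj : j < u.length), bitf n x (v[j]'(by omega)) = decide (j = i) := by
      intro j hj
      rw [bitf, dif_pos hx, hvget j hj]
      simp
    have hbne : ∀ y, y ≠ x → ∀ j (hj : j < u.length),
        bitf n y (v[j]'(by omega)) = bitf n y u[j] := by
      intro y hyx j hj
      unfold bitf
      by_cases hy : y < n
      · rw [dif_pos hy, dif_pos hy, hvget j hj]
        exact Function.update_of_ne (by simp [Fin.ext_iff, hyx]) _ _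
      · rw [dif_neg hy, dif_neg hy]
    have hmapfst : v.map Prod.fst = u.map Prod.fst := by
      apply List.ext_getElem (by simp [hvlen])
      intro j h1 h2
      rw [List.getElem_map, List.getElem_map, hvget j (by simpa using h2)]
    have hvvalid : Valid n v := by
      intro y hy
      by_cases hyx : y = x
      · subst hyx
        refine ⟨i, by omega, by rw [hbx i hi]; simp, fun j hj hbj => ?_⟩
        rw [hbx j (by omega)] at hbj
        simpa using hbj
      · exact validAt_transfer n hvlen (hbne y hyx) (hval y hy)
    have hdvx : decode n v x = i := by
      refine decode_eq n (by omega) (by rw [hbx i hi]; simp) (fun j hj hbj => ?_)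
      rw [hbx j (by omega)] at hbj
      simpa using hbj
    have hsatv : Sat (v.map Prod.fst) (decode n v) φ := by
      rw [hmapfst]
      refine (sat_congr _ φ _ _ ?_).mpr hsat
      intro y hy
      by_cases hyx : y = x
      · subst hyx
        rw [hdvx, Function.update_self]
      · rw [decode_transfer n hvlen (hbne y hyx) (hval y (hfvn y hy)),
          Function.update_of_ne hyx]
    have hmaper : v.map (er n x hx) = u.map (er n x hx) := by
      apply List.ext_getElem (by simp [hvlen])
      intro j h1 h2
      rw [List.getElem_map, List.getElem_map, hvget j (by simpa using h2)]
      simp [er, Function.update_idem]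
    exact ⟨v, ⟨hvvalid, hsatv⟩, hmaper⟩
  · -- projection membership → Sat (ex x φ)
    rintro ⟨v, ⟨hvval, hvsat⟩, hmap⟩
    have hlen : v.length = u.length := by
      have := congrArg List.length hmap
      simpa using this
    have her : ∀ j (hj : j < u.length),
        er n x hx (v[j]'(by omega)) = er n x hx u[j] := by
      intro j hj
      have h1 : (v.map (er n x hx))[j]'(by simpa [hlen] using hj)
          = (u.map (er n x hx))[j]'(by simpa using hj) := List.getElem_of_eq hmap _
      rwa [List.getElem_map, List.getElem_map] at h1
    have hfst : ∀ j (hj : j < u.length), (v[j]'(by omega)).1 = u[j].1 := by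
      intro j hj
      have := congrArg Prod.fst (her j hj)
      simpa [er] using this
    have hbit : ∀ y, y ≠ x → ∀ j (hj : j < u.length),
        bitf n y (v[j]'(by omega)) = bitf n y u[j] := by
      intro y hyx j hj
      rw [← bitf_er_ne hx hyx, her j hj, bitf_er_ne hx hyx]
    have hw : v.map Prod.fst = u.map Prod.fst := by
      apply List.ext_getElem (by simp [hlen])
      intro j h1 h2
      rw [List.getElem_map, List.getElem_map]
      exact hfst j (by simpa using h2)
    obtain ⟨hd, _, _⟩ := validAt_decode n (hvval x hx)
    simp only [Sat, List.length_map]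
    refine ⟨decode n v x, by omega, ?_⟩
    rw [hw] at hvsat
    refine (sat_congr _ φ _ _ ?_).mp hvsat
    intro y hy
    by_cases hyx : y = x
    · subst hyx
      rw [Function.update_self]
    · rw [decode_transfer n hlen (hbit y hyx) (hval y (hfvn y hy)),
        Function.update_of_ne hyx]

lemma reg_good (n : ℕ) : ∀ φ : MFO α, maxv φ ≤ n → Reg (Good n φ) := by
  intro φ
  induction φ with
  | char a x =>
    intro h
    have hx : x < n := by simp [maxv] at h; omega
    rw [good_char n a x hx]
    exact (reg_valid n).inter (reg_any _)
  | lt x y =>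
    intro h
    have hx : x < n := by simp [maxv] at h; omega
    have hy : y < n := by simp [maxv] at h; omega
    rw [good_lt n x y hx hy]
    exact (reg_valid n).inter (reg_pair _ _)
  | not φ ih =>
    intro h
    rw [good_not]
    exact (reg_valid n).inter (ih h).compl
  | or φ ψ ih1 ih2 =>
    intro h
    simp only [maxv, max_le_iff] at h
    rw [good_or]
    exact (ih1 h.1).union (ih2 h.2)
  | ex x φ ih =>
    intro h
    simp only [maxv, max_le_iff] at h
    have hx : x < n := by omega
    rw [good_ex n x φ hx h.2]
    exact (reg_valid n).inter (Reg.preimage (er n x hx) (Reg.image (er n x hx) (ih h.2)))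


lemma lang_eq (φ : MFO α) (hfv : fv φ = ∅) :
    Lang φ = List.map Prod.fst ''
      (Good (maxv φ) φ ∩
        {u : List (α × (Fin (maxv φ) → Bool)) | ∃ b t, u = b :: t ∧
          (@decide (∀ y, b.2 y = true) (Classical.propDecidable _)) = true ∧
          ∀ c ∈ t, (@decide (∀ y, c.2 y = false) (Classical.propDecidable _)) = true}) := by
  set n := maxv φ with hn
  have hvac : ∀ (w : List α) (ν ν' : ℕ → ℕ), Sat w ν φ ↔ Sat w ν' φ := by
    intro w ν ν'
    refine sat_congr w φ ν ν' ?_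
    intro y hy
    rw [hfv] at hy
    simp at hy
  ext w
  constructor
  · rintro ⟨hne, hsat⟩
    set u : List (α × (Fin n → Bool)) :=
      w.mapIdx (fun j a => (a, fun _ => decide (j = 0))) with hu
    have hulen : u.length = w.length := by simp [hu]
    have huget : ∀ j (hj : j < w.length),
        u[j]'(by omega) = (w[j], fun _ => decide (j = 0)) := by
      intro j hj; simp [hu]
    have hpos : 0 < w.length := List.length_pos_iff.mpr hne
    have hmapfst : u.map Prod.fst = w := by
      apply List.ext_getElem (by simp [hulen])
      intro j h1 h2
      rw [List.getElem_map, huget j (by omega)]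
    have hval : Valid n u := by
      intro x hx
      refine ⟨0, by omega, ?_, ?_⟩
      · rw [bitf, dif_pos hx, huget 0 hpos]; simp
      · intro j hj hbj
        rw [bitf, dif_pos hx, huget j (by omega)] at hbj
        simpa using hbj
    refine ⟨u, ⟨⟨hval, ?_⟩, ?_⟩, hmapfst⟩
    · rw [hmapfst]
      exact (hvac w _ _).mpr hsat
    · cases w with
      | nil => exact absurd rfl hne
      | cons a t =>
        rw [hu, List.mapIdx_cons]
        refine ⟨_, _, rfl, by simp, ?_⟩
        intro c hc
        obtain ⟨j, hj, rfl⟩ := List.mem_iff_getElem.mp hc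
        simp
  · rintro ⟨u, ⟨⟨hval, hsat⟩, b, t, rfl, hp, hq⟩, rfl⟩
    refine ⟨by simp, ?_⟩
    exact (hvac _ _ _).mpr hsat

end MFOProof

/-- For every MFO sentence `φ` over a finite alphabet there is a
finite-state (deterministic) automaton `A` with `L(φ) = L(A)`; in particular,
every MFO-definable language is regular. -/
theorem mfo_to_dfa {α : Type} [Fintype α] :
    (∀ φ : MFO α, φ.fv = ∅ →
      ∃ (σ : Type) (_ : Fintype σ) (A : DFA α σ), MFO.Lang φ = A.accepts) ∧
    (∀ L : Set (List α), MFO.Definable L →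
      ∃ (σ : Type) (_ : Fintype σ) (A : DFA α σ), L = A.accepts) := by
  have main : ∀ φ : MFO α, φ.fv = ∅ →
      ∃ (σ : Type) (_ : Fintype σ) (A : DFA α σ), MFO.Lang φ = A.accepts := by
    intro φ hfv
    have h := MFOProof.Reg.image Prod.fst
      ((MFOProof.reg_good (MFOProof.maxv φ) φ le_rfl).inter
        (MFOProof.reg_headTail
          (fun b : α × (Fin (MFOProof.maxv φ) → Bool) =>
            @decide (∀ y, b.2 y = true) (Classical.propDecidable _))
          (fun c : α × (Fin (MFOProof.maxv φ) → Bool) =>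
            @decide (∀ y, c.2 y = false) (Classical.propDecidable _))))
    obtain ⟨σ, i, A, hA⟩ := h
    refine ⟨σ, i, A, ?_⟩
    rw [MFOProof.lang_eq φ hfv]
    rw [← hA]
  refine ⟨main, ?_⟩
  rintro L ⟨φ, hfv, rfl⟩
  exact main φ hfv
end

section
/- MFO is strictly less expressive than finite-state automata: every MFO-definable language is regular, but there exists a regular language (namely L_even = { a^(2n) | n ≥ 1 } over the one-letter alphabet {a}) that is not MFO-definable. -/
/-- `L_even = { a^(2n) | n ≥ 1 }`: nonempty strings of even length over the
one-letter alphabet (modeled by `Unit`). -/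
def Leven : Set (List Unit) := {w | w ≠ [] ∧ Even w.length}

namespace MFOReg
open MFO

def nu0 : ℕ → ℕ := fun _ => 0

@[simp] lemma nu0_apply (x : ℕ) : nu0 x = 0 := rfl

def qr {α : Type} : MFO α → ℕ
  | .char _ _ => 0
  | .lt _ _ => 0
  | .not φ => qr φ
  | .or φ ψ => max (qr φ) (qr ψ)
  | .ex _ φ => qr φ + 1

structure Agree {α : Type} (w : List α) (ν : ℕ → ℕ) (v : List α) (μ : ℕ → ℕ) : Prop where
  range : ∀ x, ν x < w.length ↔ μ x < v.length
  lt : ∀ x y, ν x < ν y ↔ μ x < μ y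
  char : ∀ x, w[ν x]? = v[μ x]?

lemma Agree.symm' {α : Type} {w v : List α} {ν μ : ℕ → ℕ} (h : Agree w ν v μ) :
    Agree v μ w ν :=
  ⟨fun x => (h.range x).symm, fun x y => (h.lt x y).symm, fun x => (h.char x).symm⟩

lemma Agree.refl' {α : Type} (w : List α) (ν : ℕ → ℕ) : Agree w ν w ν :=
  ⟨fun _ => Iff.rfl, fun _ _ => Iff.rfl, fun _ => rfl⟩

def Equiv {α : Type} : ℕ → List α → (ℕ → ℕ) → List α → (ℕ → ℕ) → Prop
  | 0, w, ν, v, μ => Agree w ν v μ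
  | k+1, w, ν, v, μ => Agree w ν v μ ∧
      (∀ x i, i < w.length → ∃ j < v.length,
        Equiv k w (Function.update ν x i) v (Function.update μ x j)) ∧
      (∀ x j, j < v.length → ∃ i < w.length,
        Equiv k w (Function.update ν x i) v (Function.update μ x j))

lemma equiv_agree {α : Type} {k : ℕ} {w v : List α} {ν μ : ℕ → ℕ}
    (h : Equiv k w ν v μ) : Agree w ν v μ := by
  cases k with
  | zero => exact h
  | succ k => exact h.1

lemma equiv_refl {α : Type} (k : ℕ) (w : List α) (ν : ℕ → ℕ) : Equiv k w ν w ν := by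
  induction k generalizing ν with
  | zero => exact Agree.refl' w ν
  | succ k ih =>
    exact ⟨Agree.refl' w ν, fun x i hi => ⟨i, hi, ih _⟩, fun x j hj => ⟨j, hj, ih _⟩⟩

lemma equiv_symm {α : Type} {k : ℕ} {w v : List α} {ν μ : ℕ → ℕ}
    (h : Equiv k w ν v μ) : Equiv k v μ w ν := by
  induction k generalizing ν μ with
  | zero => exact Agree.symm' h
  | succ k ih =>
    obtain ⟨ha, hf, hb⟩ := h
    exact ⟨ha.symm', fun x j hj => by obtain ⟨i, hi, he⟩ := hb x j hj; exact ⟨i, hi, ih he⟩,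
      fun x i hi => by obtain ⟨j, hj, he⟩ := hf x i hi; exact ⟨j, hj, ih he⟩⟩

lemma equiv_mono {α : Type} {k : ℕ} {w v : List α} {ν μ : ℕ → ℕ}
    (h : Equiv (k+1) w ν v μ) : Equiv k w ν v μ := by
  induction k generalizing ν μ with
  | zero => exact h.1
  | succ k ih =>
    obtain ⟨ha, hf, hb⟩ := h
    exact ⟨ha, fun x i hi => by obtain ⟨j, hj, he⟩ := hf x i hi; exact ⟨j, hj, ih he⟩,
      fun x j hj => by obtain ⟨i, hi, he⟩ := hb x j hj; exact ⟨i, hi, ih he⟩⟩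

lemma equiv_of_le {α : Type} {j k : ℕ} (hjk : j ≤ k) {w v : List α} {ν μ : ℕ → ℕ}
    (h : Equiv k w ν v μ) : Equiv j w ν v μ := by
  induction hjk with
  | refl => exact h
  | @step m hm ih => exact ih (equiv_mono h)

lemma sat_iff {α : Type} (φ : MFO α) : ∀ (k : ℕ), qr φ ≤ k →
    ∀ (w v : List α) (ν μ : ℕ → ℕ), Equiv k w ν v μ → (Sat w ν φ ↔ Sat v μ φ) := by
  induction φ with
  | char a x =>
    intro k _ w v ν μ h
    have := (equiv_agree h).char x
    simp only [Sat, this]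
  | lt x y =>
    intro k _ w v ν μ h
    exact (equiv_agree h).lt x y
  | not φ ih =>
    intro k hk w v ν μ h
    exact not_congr (ih k hk w v ν μ h)
  | or φ ψ ih1 ih2 =>
    intro k hk w v ν μ h
    simp only [qr, max_le_iff] at hk
    exact or_congr (ih1 k hk.1 w v ν μ h) (ih2 k hk.2 w v ν μ h)
  | ex x φ ih =>
    intro k hk w v ν μ h
    cases k with
    | zero => exact absurd hk (by simp [qr])
    | succ k =>
      have hq : qr φ ≤ k := by simpa [qr] using hk
      obtain ⟨_, hf, hb⟩ := h
      constructor
      · rintro ⟨i, hi, hs⟩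
        obtain ⟨j, hj, he⟩ := hf x i hi
        exact ⟨j, hj, (ih k hq w v _ _ he).mp hs⟩
      · rintro ⟨j, hj, hs⟩
        obtain ⟨i, hi, he⟩ := hb x j hj
        exact ⟨i, hi, (ih k hq w v _ _ he).mpr hs⟩


variable {α : Type}

lemma agree_append {u u' x x' : List α} {ν₁ ν₁' ν₂ ν₂' : ℕ → ℕ} (s : ℕ → Bool)
    (hs : ∀ z, s z = true → ν₁ z < u.length)
    (h₁ : Agree u ν₁ u' ν₁') (h₂ : Agree x ν₂ x' ν₂') :
    Agree (u ++ x) (fun z => if s z then ν₁ z else u.length + ν₂ z)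
      (u' ++ x') (fun z => if s z then ν₁' z else u'.length + ν₂' z) := by
  constructor
  · intro z
    cases hsz : s z with
    | true =>
      have h1 := hs z hsz
      have h2 := (h₁.range z).mp h1
      simp [hsz, List.length_append]
      omega
    | false =>
      have := h₂.range z
      simp [hsz, List.length_append]
      omega
  · intro z y
    cases hsz : s z with
    | true =>
      have hz := hs z hsz
      have hz' := (h₁.range z).mp hz
      cases hsy : s y with
      | true => simpa [hsz, hsy] using h₁.lt z y
      | false =>
        simp only [hsz, hsy, Bool.false_eq_true, if_false, if_true]
        omega
    | false =>
      cases hsy : s y with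
      | true =>
        have hy := hs y hsy
        have hy' := (h₁.range y).mp hy
        simp only [hsz, hsy, Bool.false_eq_true, if_false, if_true]
        omega
      | false =>
        have := h₂.lt z y
        simp only [hsz, hsy, Bool.false_eq_true, if_false]
        omega
  · intro z
    cases hsz : s z with
    | true =>
      have hz := hs z hsz
      have hz' := (h₁.range z).mp hz
      simp only [hsz, if_true]
      show (u ++ x)[ν₁ z]? = (u' ++ x')[ν₁' z]?
      rw [List.getElem?_append_left hz, List.getElem?_append_left hz']
      exact h₁.char z
    | false =>
      simp only [hsz, Bool.false_eq_true, if_false]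
      rw [List.getElem?_append_right (Nat.le_add_right _ _),
        List.getElem?_append_right (Nat.le_add_right _ _)]
      simpa using h₂.char z

lemma equiv_append : ∀ (k : ℕ) (s : ℕ → Bool) (u u' x x' : List α) (ν₁ ν₁' ν₂ ν₂' : ℕ → ℕ),
    (∀ z, s z = true → ν₁ z < u.length) →
    Equiv k u ν₁ u' ν₁' → Equiv k x ν₂ x' ν₂' →
    Equiv k (u ++ x) (fun z => if s z then ν₁ z else u.length + ν₂ z)
      (u' ++ x') (fun z => if s z then ν₁' z else u'.length + ν₂' z) := by
  intro k
  induction k with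
  | zero =>
    intro s u u' x x' ν₁ ν₁' ν₂ ν₂' hs h₁ h₂
    exact agree_append s hs h₁ h₂
  | succ k ih =>
    intro s u u' x x' ν₁ ν₁' ν₂ ν₂' hs h₁ h₂
    refine ⟨agree_append s hs (equiv_agree h₁) (equiv_agree h₂), ?_, ?_⟩
    · intro z i hi
      rw [List.length_append] at hi
      rcases lt_or_ge i u.length with hlt | hge
      · obtain ⟨j, hj, he⟩ := h₁.2.1 z i hlt
        refine ⟨j, by simp [List.length_append]; omega, ?_⟩
        have e1 : (fun z' => if Function.update s z true z' then Function.update ν₁ z i z'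
            else u.length + ν₂ z') = Function.update
              (fun z' => if s z' then ν₁ z' else u.length + ν₂ z') z i := by
          funext z'
          by_cases hz : z' = z <;> simp [hz, Function.update_apply]
        have e2 : (fun z' => if Function.update s z true z' then Function.update ν₁' z j z'
            else u'.length + ν₂' z') = Function.update
              (fun z' => if s z' then ν₁' z' else u'.length + ν₂' z') z j := by
          funext z'
          by_cases hz : z' = z <;> simp [hz, Function.update_apply]
        rw [← e1, ← e2]
        refine ih (Function.update s z true) u u' x x' _ _ _ _ ?_ he (equiv_mono h₂)
        intro z' hz'
        by_cases hz : z' = z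
        · subst hz; rw [Function.update_self]; exact hlt
        · rw [Function.update_of_ne hz] at hz'
          rw [Function.update_of_ne hz]
          exact hs z' hz'
      · obtain ⟨j₂, hj₂, he⟩ := h₂.2.1 z (i - u.length) (by omega)
        refine ⟨u'.length + j₂, by simp [List.length_append]; omega, ?_⟩
        have e1 : (fun z' => if Function.update s z false z' then ν₁ z'
            else u.length + Function.update ν₂ z (i - u.length) z') = Function.update
              (fun z' => if s z' then ν₁ z' else u.length + ν₂ z') z i := by
          funext z'
          by_cases hz : z' = z <;> simp [hz, Function.update_apply]
          omega
        have e2 : (fun z' => if Function.update s z false z' then ν₁' z'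
            else u'.length + Function.update ν₂' z j₂ z') = Function.update
              (fun z' => if s z' then ν₁' z' else u'.length + ν₂' z') z (u'.length + j₂) := by
          funext z'
          by_cases hz : z' = z <;> simp [hz, Function.update_apply]
        rw [← e1, ← e2]
        refine ih (Function.update s z false) u u' x x' _ _ _ _ ?_ (equiv_mono h₁) he
        intro z' hz'
        by_cases hz : z' = z
        · subst hz; simp at hz'
        · rw [Function.update_of_ne hz] at hz'
          exact hs z' hz'
    · intro z j hj
      rw [List.length_append] at hj
      rcases lt_or_ge j u'.length with hlt | hge
      · obtain ⟨i, hi, he⟩ := h₁.2.2 z j hlt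
        refine ⟨i, by simp [List.length_append]; omega, ?_⟩
        have e1 : (fun z' => if Function.update s z true z' then Function.update ν₁ z i z'
            else u.length + ν₂ z') = Function.update
              (fun z' => if s z' then ν₁ z' else u.length + ν₂ z') z i := by
          funext z'
          by_cases hz : z' = z <;> simp [hz, Function.update_apply]
        have e2 : (fun z' => if Function.update s z true z' then Function.update ν₁' z j z'
            else u'.length + ν₂' z') = Function.update
              (fun z' => if s z' then ν₁' z' else u'.length + ν₂' z') z j := by
          funext z'
          by_cases hz : z' = z <;> simp [hz, Function.update_apply]
        rw [← e1, ← e2]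
        refine ih (Function.update s z true) u u' x x' _ _ _ _ ?_ he (equiv_mono h₂)
        intro z' hz'
        by_cases hz : z' = z
        · subst hz; rw [Function.update_self]; exact hi
        · rw [Function.update_of_ne hz] at hz'
          rw [Function.update_of_ne hz]
          exact hs z' hz'
      · obtain ⟨i₂, hi₂, he⟩ := h₂.2.2 z (j - u'.length) (by omega)
        refine ⟨u.length + i₂, by simp [List.length_append]; omega, ?_⟩
        have e1 : (fun z' => if Function.update s z false z' then ν₁ z'
            else u.length + Function.update ν₂ z i₂ z') = Function.update
              (fun z' => if s z' then ν₁ z' else u.length + ν₂ z') z (u.length + i₂) := by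
          funext z'
          by_cases hz : z' = z <;> simp [hz, Function.update_apply]
        have e2 : (fun z' => if Function.update s z false z' then ν₁' z'
            else u'.length + Function.update ν₂' z (j - u'.length) z') = Function.update
              (fun z' => if s z' then ν₁' z' else u'.length + ν₂' z') z j := by
          funext z'
          by_cases hz : z' = z <;> simp [hz, Function.update_apply]
          omega
        rw [← e1, ← e2]
        refine ih (Function.update s z false) u u' x x' _ _ _ _ ?_ (equiv_mono h₁) he
        intro z' hz'
        by_cases hz : z' = z
        · subst hz; simp at hz'
        · rw [Function.update_of_ne hz] at hz'
          exact hs z' hz'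


def Th (α : Type) : ℕ → Type
  | 0 => Bool × Option α
  | k+1 => Th α k × Set (Th α k × α × Th α k)

lemma th_finite (α : Type) [Finite α] : ∀ k, Finite (Th α k)
  | 0 => by
    have := Fintype.ofFinite α
    unfold Th; infer_instance
  | k+1 => by
    have := th_finite α k
    unfold Th; infer_instance

def T {α : Type} : (k : ℕ) → List α → Th α k
  | 0, w => (w.isEmpty, w[0]?)
  | k+1, w => (T k w, {p | ∃ u a v, w = u ++ a :: v ∧ p = (T k u, a, T k v)})

lemma T_down {α : Type} {k : ℕ} {w w' : List α} (h : T (k+1) w = T (k+1) w') :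
    T k w = T k w' := congrArg Prod.fst h

lemma T_zero {α : Type} : ∀ {k : ℕ} {w w' : List α}, T k w = T k w' → T 0 w = T 0 w' := by
  intro k
  induction k with
  | zero => exact fun h => h
  | succ k ih => exact fun h => ih (T_down h)

lemma T_empty_iff {α : Type} {k : ℕ} {w w' : List α} (h : T k w = T k w') :
    w = [] ↔ w' = [] := by
  have h0 := T_zero h
  have : w.isEmpty = w'.isEmpty := congrArg Prod.fst h0
  simp only [← List.isEmpty_iff, this]

lemma agree_nu0 {α : Type} {w w' : List α} (h : T 0 w = T 0 w') :
    Agree w nu0 w' nu0 := by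
  have h1 : w.isEmpty = w'.isEmpty := congrArg Prod.fst h
  have h2 : w[0]? = w'[0]? := congrArg Prod.snd h
  have hlen : w.length = 0 ↔ w'.length = 0 := by
    rw [← List.isEmpty_iff_length_eq_zero, ← List.isEmpty_iff_length_eq_zero, h1]
  constructor
  · intro x
    simp only [nu0_apply]
    omega
  · intro x y
    exact Iff.rfl
  · intro x
    simp only [nu0_apply]
    exact h2


lemma equiv_glue {α : Type} (k : ℕ)
    (ihk : ∀ w w' : List α, T k w = T k w' → Equiv k w nu0 w' nu0)
    (z : ℕ) (u v u' v' : List α) (a : α)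
    (h1 : T k u = T k u') (h2 : T k v = T k v') :
    Equiv k (u ++ a :: v) (Function.update nu0 z u.length)
      (u' ++ a :: v') (Function.update nu0 z u'.length) := by
  have e1 : Equiv k u nu0 u' nu0 := ihk _ _ h1
  have e2 : Equiv k v nu0 v' nu0 := ihk _ _ h2
  have ea : Equiv k [a] nu0 [a] nu0 := equiv_refl k [a] nu0
  have hemp : u.isEmpty = u'.isEmpty := congrArg Prod.fst (T_zero h1)
  have hsA : ∀ z', (decide (z' ≠ z) && !u.isEmpty) = true → nu0 z' < u.length := by
    intro z' hz'
    simp only [Bool.and_eq_true, decide_eq_true_eq, Bool.not_eq_true'] at hz'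
    have hne : u ≠ [] := by
      intro hcon
      rw [hcon] at hz'
      simp at hz'
    simp only [nu0_apply]
    exact List.length_pos_iff.mpr hne
  have hA := equiv_append k (fun z' => decide (z' ≠ z) && !u.isEmpty) u u' [a] [a]
      nu0 nu0 nu0 nu0 hsA e1 ea
  have eA1 : (fun z' => if (decide (z' ≠ z) && !u.isEmpty) = true then nu0 z'
      else u.length + nu0 z') = Function.update nu0 z u.length := by
    funext z'
    by_cases hz : z' = z
    · subst hz; simp
    · by_cases hu : u.isEmpty
      · have h0 : u.length = 0 := List.isEmpty_iff_length_eq_zero.mp hu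
        simp [hz, hu, Function.update_of_ne hz, h0]
      · simp [hz, hu, Function.update_of_ne hz]
  have eA2 : (fun z' => if (decide (z' ≠ z) && !u.isEmpty) = true then nu0 z'
      else u'.length + nu0 z') = Function.update nu0 z u'.length := by
    funext z'
    by_cases hz : z' = z
    · subst hz; simp
    · by_cases hu : u.isEmpty
      · have h0 : u'.length = 0 := List.isEmpty_iff_length_eq_zero.mp (hemp ▸ hu)
        simp [hz, hu, Function.update_of_ne hz, h0]
      · simp [hz, hu, Function.update_of_ne hz]
  rw [eA1, eA2] at hA
  have hsB : ∀ z', (true : Bool) = true → Function.update nu0 z u.length z' < (u ++ [a]).length := by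
    intro z' _
    by_cases hz : z' = z
    · subst hz; simp
    · simp [Function.update_of_ne hz, List.length_append]
  have hB := equiv_append k (fun _ => (true : Bool)) (u ++ [a]) (u' ++ [a]) v v'
      (Function.update nu0 z u.length) (Function.update nu0 z u'.length) nu0 nu0 hsB hA e2
  have eB1 : (fun z' => if (true : Bool) = true then Function.update nu0 z u.length z'
      else (u ++ [a]).length + nu0 z') = Function.update nu0 z u.length := by
    funext z'; simp
  have eB2 : (fun z' => if (true : Bool) = true then Function.update nu0 z u'.length z'
      else (u' ++ [a]).length + nu0 z') = Function.update nu0 z u'.length := by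
    funext z'; simp
  rw [eB1, eB2, List.append_assoc, List.append_assoc, List.singleton_append,
    List.singleton_append] at hB
  exact hB

lemma equiv_of_T_eq {α : Type} : ∀ (k : ℕ) (w w' : List α),
    T k w = T k w' → Equiv k w nu0 w' nu0 := by
  intro k
  induction k with
  | zero =>
    intro w w' h
    exact agree_nu0 h
  | succ k ih =>
    intro w w' h
    have h1 : T k w = T k w' := T_down h
    have hS : ({p | ∃ u a v, w = u ++ a :: v ∧ p = (T k u, a, T k v)} :
        Set (Th α k × α × Th α k)) =
        {p | ∃ u a v, w' = u ++ a :: v ∧ p = (T k u, a, T k v)} :=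
      congrArg Prod.snd h
    refine ⟨agree_nu0 (T_zero h1), ?_, ?_⟩
    · intro z i hi
      obtain ⟨u, a, v, hw, hlen⟩ : ∃ u a v, w = u ++ a :: v ∧ u.length = i := by
        refine ⟨w.take i, w[i], w.drop (i+1), ?_, ?_⟩
        · rw [List.getElem_cons_drop]
          exact (List.take_append_drop i w).symm
        · simpa using le_of_lt hi
      subst hlen
      subst hw
      have hmem : (T k u, a, T k v) ∈
          {p | ∃ u' a' v', w' = u' ++ a' :: v' ∧ p = (T k u', a', T k v')} := by
        rw [← hS]
        exact ⟨u, a, v, rfl, rfl⟩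
      obtain ⟨u', a', v', hw', hp⟩ := hmem
      simp only [Prod.mk.injEq] at hp
      obtain ⟨hu, ha, hv⟩ := hp
      subst ha
      subst hw'
      refine ⟨u'.length, by simp, ?_⟩
      exact equiv_glue k ih z u v u' v' a hu hv
    · intro z j hj
      obtain ⟨u', a, v', hw', hlen⟩ : ∃ u' a v', w' = u' ++ a :: v' ∧ u'.length = j := by
        refine ⟨w'.take j, w'[j], w'.drop (j+1), ?_, ?_⟩
        · rw [List.getElem_cons_drop]
          exact (List.take_append_drop j w').symm
        · simpa using le_of_lt hj
      subst hlen
      subst hw'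
      have hmem : (T k u', a, T k v') ∈
          {p | ∃ u a v, w = u ++ a :: v ∧ p = (T k u, a, T k v)} := by
        rw [hS]
        exact ⟨u', a, v', rfl, rfl⟩
      obtain ⟨u, a', v, hw, hp⟩ := hmem
      simp only [Prod.mk.injEq] at hp
      obtain ⟨hu, ha, hv⟩ := hp
      subst ha
      subst hw
      refine ⟨u.length, by simp, ?_⟩
      exact equiv_symm (equiv_glue k ih z u' v' u v a hu hv)


def mnRel {α : Type} (L : Set (List α)) (u v : List α) : Prop :=
  ∀ x, u ++ x ∈ L ↔ v ++ x ∈ L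

def mnSetoid {α : Type} (L : Set (List α)) : Setoid (List α) :=
  ⟨mnRel L, ⟨fun _ _ => Iff.rfl, fun h x => (h x).symm, fun h1 h2 x => (h1 x).trans (h2 x)⟩⟩

def mnDFA {α : Type} (L : Set (List α)) : DFA α (Quotient (mnSetoid L)) where
  step s a := Quotient.liftOn s (fun w => Quotient.mk (mnSetoid L) (w ++ [a]))
    (fun u v h => Quotient.sound (fun x => by
      rw [List.append_assoc, List.append_assoc]
      exact h ([a] ++ x)))
  start := Quotient.mk _ []
  accept := {s | ∃ w, Quotient.mk (mnSetoid L) w = s ∧ w ∈ L}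

lemma mnDFA_eval {α : Type} (L : Set (List α)) (w : List α) :
    (mnDFA L).eval w = Quotient.mk (mnSetoid L) w := by
  induction w using List.reverseRecOn with
  | nil => rfl
  | append_singleton xs a ih =>
    rw [DFA.eval_append_singleton, ih]
    rfl

lemma mnDFA_accepts {α : Type} (L : Set (List α)) : (mnDFA L).accepts = L := by
  ext x
  rw [DFA.mem_accepts, mnDFA_eval]
  constructor
  · rintro ⟨w, hw, hwL⟩
    have hrel : mnRel L w x := Quotient.exact hw
    have := hrel []
    exact (by simpa using this.mp (by simpa using hwL) : x ∈ L)
  · intro hx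
    exact ⟨x, rfl, hx⟩

lemma mn_finite {α Θ : Type} [Finite Θ] (L : Set (List α)) (f : List α → Θ)
    (hf : ∀ u v, f u = f v → mnRel L u v) : Finite (Quotient (mnSetoid L)) := by
  classical
  apply Finite.of_surjective (fun t : Θ =>
    if h : ∃ w, f w = t then Quotient.mk (mnSetoid L) h.choose
    else Quotient.mk (mnSetoid L) [])
  intro s
  induction s using Quotient.ind with
  | _ w =>
    refine ⟨f w, ?_⟩
    have hex : ∃ w', f w' = f w := ⟨w, rfl⟩
    show (if h : ∃ w', f w' = f w then Quotient.mk (mnSetoid L) h.choose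
      else Quotient.mk (mnSetoid L) []) = Quotient.mk (mnSetoid L) w
    rw [dif_pos hex]
    exact Quotient.sound (hf _ _ (Exists.choose_spec hex))

lemma T_mnRel {α : Type} (φ : MFO α) (u v : List α)
    (h : T (qr φ) u = T (qr φ) v) : mnRel (Lang φ) u v := by
  intro x
  by_cases hu : u = []
  · have hv : v = [] := (T_empty_iff h).mp hu
    rw [hu, hv]
  · have hv : v ≠ [] := fun hc => hu ((T_empty_iff h).mpr hc)
    have e := equiv_of_T_eq (qr φ) u v h
    have hx := equiv_append (qr φ) (fun _ => (true : Bool)) u v x x nu0 nu0 nu0 nu0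
      (fun z _ => by simp only [nu0_apply]; exact List.length_pos_iff.mpr hu) e (equiv_refl _ x nu0)
    have efun1 : (fun z => if (true : Bool) = true then nu0 z else u.length + nu0 z) = nu0 := by
      funext z; simp
    have efun2 : (fun z => if (true : Bool) = true then nu0 z else v.length + nu0 z) = nu0 := by
      funext z; simp
    rw [efun1, efun2] at hx
    have hsat := sat_iff φ (qr φ) le_rfl _ _ _ _ hx
    simp only [Lang, Set.mem_setOf_eq]
    constructor
    · rintro ⟨-, hs⟩
      exact ⟨by simp [hv], hsat.mp hs⟩
    · rintro ⟨-, hs⟩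
      exact ⟨by simp [hu], hsat.mpr hs⟩

lemma unit_eq_replicate (l : List Unit) : l = List.replicate l.length () := by
  induction l with
  | nil => rfl
  | cons a t ih =>
    cases a
    rw [List.length_cons, List.replicate_succ, ← ih]

lemma unit_ext {l l' : List Unit} (h : l.length = l'.length) : l = l' := by
  rw [unit_eq_replicate l, unit_eq_replicate l', h]

lemma rep_succ_isEmpty (j : ℕ) : (List.replicate (j+1) ()).isEmpty = false := by
  rw [List.replicate_succ]
  rfl

lemma rep_succ_get0 (j : ℕ) : (List.replicate (j+1) ())[0]? = some () := by
  rw [List.replicate_succ]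
  simp

lemma T_rep : ∀ (k m n : ℕ), 2 ^ (k+1) - 1 ≤ m → 2 ^ (k+1) - 1 ≤ n →
    T k (List.replicate m ()) = T k (List.replicate n ()) := by
  intro k
  induction k with
  | zero =>
    intro m n hm hn
    have hm1 : 1 ≤ m := by simpa using hm
    have hn1 : 1 ≤ n := by simpa using hn
    obtain ⟨m', rfl⟩ : ∃ m', m = m' + 1 := ⟨m - 1, by omega⟩
    obtain ⟨n', rfl⟩ : ∃ n', n = n' + 1 := ⟨n - 1, by omega⟩
    simp only [T, Prod.mk.injEq]
    rw [rep_succ_isEmpty, rep_succ_isEmpty, rep_succ_get0, rep_succ_get0]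
    try exact ⟨rfl, rfl⟩
  | succ k ih =>
    intro m n hm hn
    have p2 : 2 ^ (k+1+1) = 2 * 2 ^ (k+1) := by rw [pow_succ]; ring
    have p1 : 1 ≤ 2 ^ (k+1) := Nat.one_le_two_pow
    simp only [T]
    have key : ∀ m n : ℕ, 2 ^ (k+1+1) - 1 ≤ m → 2 ^ (k+1+1) - 1 ≤ n →
        ∀ p : Th Unit k × Unit × Th Unit k,
        (∃ u a v, List.replicate m () = u ++ a :: v ∧ p = (T k u, a, T k v)) →
        (∃ u a v, List.replicate n () = u ++ a :: v ∧ p = (T k u, a, T k v)) := by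
      intro m n hm hn p hp
      obtain ⟨u, ⟨⟩, v, heq, rfl⟩ := hp
      have hlen : m = u.length + 1 + v.length := by
        have := congrArg List.length heq
        simp [List.length_append] at this
        omega
      have hu : u = List.replicate u.length () := unit_eq_replicate u
      have hv : v = List.replicate v.length () := unit_eq_replicate v
      by_cases hiN : u.length < 2 ^ (k+1) - 1
      · refine ⟨List.replicate u.length (), (), List.replicate (n - 1 - u.length) (), ?_, ?_⟩
        · apply unit_ext
          simp [List.length_append]
          omega
        · simp only [Prod.mk.injEq]
          refine ⟨congrArg (T k) hu, by trivial, ?_⟩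
          rw [hv]
          exact ih v.length (n - 1 - u.length) (by omega) (by omega)
      · by_cases hrN : v.length < 2 ^ (k+1) - 1
        · refine ⟨List.replicate (n - 1 - v.length) (), (), List.replicate v.length (), ?_, ?_⟩
          · apply unit_ext
            simp [List.length_append]
            omega
          · simp only [Prod.mk.injEq]
            refine ⟨?_, by trivial, congrArg (T k) hv⟩
            rw [hu]
            exact ih u.length (n - 1 - v.length) (by omega) (by omega)
        · refine ⟨List.replicate (2 ^ (k+1) - 1) (), (), List.replicate (n - 2 ^ (k+1)) (), ?_, ?_⟩
          · apply unit_ext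
            simp [List.length_append]
            omega
          · simp only [Prod.mk.injEq]
            refine ⟨?_, by trivial, ?_⟩
            · rw [hu]
              exact ih u.length (2 ^ (k+1) - 1) (by omega) (by omega)
            · rw [hv]
              exact ih v.length (n - 2 ^ (k+1)) (by omega) (by omega)
    have h2 : {p : Th Unit k × Unit × Th Unit k |
          ∃ u a v, List.replicate m () = u ++ a :: v ∧ p = (T k u, a, T k v)} =
        {p : Th Unit k × Unit × Th Unit k |
          ∃ u a v, List.replicate n () = u ++ a :: v ∧ p = (T k u, a, T k v)} := by
      ext p
      simp only [Set.mem_setOf_eq]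
      exact ⟨key m n hm hn p, key n m hn hm p⟩
    exact congrArg₂ Prod.mk (ih m n (by omega) (by omega)) h2


lemma part1 {α : Type} [Fintype α] (L : Set (List α)) (hd : MFO.Definable L) :
    ∃ (σ : Type) (_ : Fintype σ) (A : DFA α σ), L = A.accepts := by
  obtain ⟨φ, -, rfl⟩ := hd
  have hα : Finite α := Finite.of_fintype α
  have hth : Finite (Th α (qr φ)) := th_finite α (qr φ)
  have hfin : Finite (Quotient (mnSetoid (Lang φ))) :=
    mn_finite (Lang φ) (T (qr φ)) (fun u v h => T_mnRel φ u v h)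
  exact ⟨Quotient (mnSetoid (Lang φ)), Fintype.ofFinite _, mnDFA (Lang φ),
    (mnDFA_accepts _).symm⟩

def evenDFA : DFA Unit (Option Bool) where
  step s _ := some (match s with | none => false | some b => !b)
  start := none
  accept := {some true}

lemma evenDFA_evalFrom : ∀ (w : List Unit) (b : Bool),
    evenDFA.evalFrom (some b) w = some (xor b (decide (Odd w.length))) := by
  intro w
  induction w with
  | nil =>
    intro b
    simp [DFA.evalFrom]
  | cons a t ih =>
    intro b
    have h1 : evenDFA.evalFrom (some b) (a :: t) = evenDFA.evalFrom (some (!b)) t := rfl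
    rw [h1, ih (!b)]
    congr 1
    simp only [List.length_cons, Nat.odd_iff]
    rcases Nat.even_or_odd t.length with he | ho
    · have h2 : t.length % 2 = 0 := Nat.even_iff.mp he
      have h3 : (t.length + 1) % 2 = 1 := by omega
      cases b <;> simp [h2, h3]
    · have h2 : t.length % 2 = 1 := Nat.odd_iff.mp ho
      have h3 : (t.length + 1) % 2 ≠ 1 := by omega
      cases b <;> simp [h2, h3]

lemma evenDFA_eval_cons (a : Unit) (t : List Unit) :
    evenDFA.eval (a :: t) = some (decide (Odd t.length)) := by
  have h0 : evenDFA.eval (a :: t) = evenDFA.evalFrom (some false) t := rfl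
  rw [h0, evenDFA_evalFrom]
  simp

lemma evenDFA_accepts : Leven = evenDFA.accepts := by
  ext w
  show w ∈ Leven ↔ evenDFA.eval w ∈ evenDFA.accept
  cases w with
  | nil =>
    have h1 : evenDFA.eval ([] : List Unit) = none := rfl
    rw [h1]
    simp [Leven, evenDFA]
  | cons a t =>
    rw [evenDFA_eval_cons]
    have hacc : (evenDFA.accept : Set (Option Bool)) = {some true} := rfl
    rw [hacc]
    simp only [Set.mem_singleton_iff, Option.some.injEq, Leven, Set.mem_setOf_eq,
      List.length_cons]
    have hiff : Even (t.length + 1) ↔ Odd t.length := by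
      rw [Nat.even_iff, Nat.odd_iff]
      omega
    constructor
    · rintro ⟨-, hev⟩
      exact decide_eq_true (hiff.mp hev)
    · intro hb
      exact ⟨by simp, hiff.mpr (of_decide_eq_true hb)⟩

lemma part3 : ¬ MFO.Definable Leven := by
  rintro ⟨φ, -, hL⟩
  set k := qr φ with hk
  set m := 2 ^ (k + 1) with hm
  have hpow : 1 ≤ m := Nat.one_le_two_pow
  have h := T_rep k m (m + 1) (by omega) (by omega)
  have e := equiv_of_T_eq k _ _ h
  have hsat := sat_iff φ k le_rfl _ _ _ _ e
  have hev : Even m := ⟨2 ^ k, by rw [hm, pow_succ]; ring⟩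
  have h1 : List.replicate m () ∈ Leven := ⟨by simp; omega, by simpa using hev⟩
  rw [hL] at h1
  have h2 : List.replicate (m + 1) () ∈ Lang φ := ⟨by simp, hsat.mp h1.2⟩
  rw [← hL] at h2
  have hodd : Even (m + 1) := by simpa using h2.2
  rcases hev with ⟨r, hr⟩
  rcases hodd with ⟨s, hs⟩
  omega

end MFOReg

/-- MFO is strictly less expressive than finite-state automata:
every MFO-definable language is regular, but the regular language `L_even`
is not MFO-definable. -/
theorem mfo_strictly_less_expressive_than_fsa :
    (∀ (α : Type) [Fintype α] (L : Set (List α)), MFO.Definable L →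
      ∃ (σ : Type) (_ : Fintype σ) (A : DFA α σ), L = A.accepts) ∧
    (∃ (σ : Type) (_ : Fintype σ) (A : DFA Unit σ), Leven = A.accepts) ∧
    ¬ MFO.Definable Leven := by
  refine ⟨fun α _ L hd => MFOReg.part1 L hd,
    ⟨Option Bool, inferInstance, MFOReg.evenDFA, MFOReg.evenDFA_accepts⟩,
    MFOReg.part3⟩
end

section
/- The family of MFO-definable languages is not closed under the Kleene star operation: over the one-letter alphabet {a}, the language L_aa = {aa} is MFO-definable, but its Kleene star L_aa* restricted to nonempty strings, which equals L_even = { a^(2n) | n ≥ 1 }, is not MFO-definable. -/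
open Computability

/-! ### Auxiliary development -/

namespace MFOStar

/-- Quantifier depth. -/
def qd {α : Type} : MFO α → ℕ
  | .char _ _ => 0
  | .lt _ _ => 0
  | .not φ => qd φ
  | .or φ ψ => max (qd φ) (qd ψ)
  | .ex _ φ => qd φ + 1

/-- Two integers are `k`-equivalent: equal, or both at least `2^k`, or both at
most `-2^k`. -/
def dEq (k : ℕ) (a b : ℤ) : Prop :=
  a = b ∨ ((2:ℤ)^k ≤ a ∧ (2:ℤ)^k ≤ b) ∨ (a ≤ -(2:ℤ)^k ∧ b ≤ -(2:ℤ)^k)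

lemma dEq_refl (k : ℕ) (a : ℤ) : dEq k a a := Or.inl rfl

lemma dEq_symm {k : ℕ} {a b : ℤ} (h : dEq k a b) : dEq k b a := by
  rcases h with h | h | h
  · exact Or.inl h.symm
  · exact Or.inr (Or.inl ⟨h.2, h.1⟩)
  · exact Or.inr (Or.inr ⟨h.2, h.1⟩)

lemma dEq_neg {k : ℕ} {a b : ℤ} (h : dEq k a b) : dEq k (-a) (-b) := by
  rcases h with h | h | h
  · exact Or.inl (by omega)
  · exact Or.inr (Or.inr ⟨by omega, by omega⟩)
  · exact Or.inr (Or.inl ⟨by omega, by omega⟩)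

lemma two_pow_pos (k : ℕ) : (0:ℤ) < 2^k := by positivity

lemma dEq_mono {k k' : ℕ} {a b : ℤ} (hk : k' ≤ k) (h : dEq k a b) : dEq k' a b := by
  have : (2:ℤ)^k' ≤ 2^k := pow_le_pow_right₀ (by norm_num) hk
  rcases h with h | h | h
  · exact Or.inl h
  · exact Or.inr (Or.inl ⟨by omega, by omega⟩)
  · exact Or.inr (Or.inr ⟨by omega, by omega⟩)

lemma dEq_pos {k : ℕ} {a b : ℤ} (h : dEq k a b) : 0 < a ↔ 0 < b := by
  have := two_pow_pos k
  rcases h with h | h | h <;> omega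

lemma dEq_nonneg {k : ℕ} {a b : ℤ} (h : dEq k a b) : 0 ≤ a ↔ 0 ≤ b := by
  have := two_pow_pos k
  rcases h with h | h | h <;> omega

lemma dEq_ge {k : ℕ} {a b : ℤ} (h : dEq k a b) (ha : (2:ℤ)^k ≤ a) : (2:ℤ)^k ≤ b := by
  have := two_pow_pos k
  rcases h with h | h | h <;> omega

/-- Extension lemma: a new point `i` can be matched by a point `j` with all
distances `k`-equivalent, losing one level of precision. -/
lemma extend {ι : Type} {k : ℕ} (T : Finset ι) (u v : ι → ℤ)
    (h : ∀ p ∈ T, ∀ q ∈ T, dEq (k+1) (u q - u p) (v q - v p))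
    (i : ℤ) (hlow : ∃ p ∈ T, u p < i) :
    ∃ j : ℤ, ∀ p ∈ T, dEq k (i - u p) (j - v p) := by
  classical
  have hpow : (2:ℤ)^(k+1) = 2^k + 2^k := by ring
  by_cases hc : ∃ p ∈ T, |i - u p| ≤ 2^k
  · obtain ⟨p, hp, hd⟩ := hc
    rw [abs_le] at hd
    refine ⟨v p + (i - u p), fun q hq => ?_⟩
    have hqp := h q hq p hp
    rcases hqp with heq | ⟨h1, h2⟩ | ⟨h1, h2⟩
    · exact Or.inl (by omega)
    · exact Or.inr (Or.inl ⟨by omega, by omega⟩)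
    · exact Or.inr (Or.inr ⟨by omega, by omega⟩)
  · push_neg at hc
    obtain ⟨p0, hp0, hp0i⟩ := hlow
    have hB : (T.filter (fun p => u p < i)).Nonempty :=
      ⟨p0, Finset.mem_filter.mpr ⟨hp0, hp0i⟩⟩
    obtain ⟨p, hpB, hpmax⟩ := Finset.exists_max_image _ u hB
    have hpT : p ∈ T := (Finset.mem_filter.mp hpB).1
    have hpi : u p < i := (Finset.mem_filter.mp hpB).2
    have hip : (2:ℤ)^k < i - u p := by
      have := lt_abs.mp (hc p hpT); omega
    refine ⟨v p + 2^k, fun q hq => ?_⟩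
    rcases lt_or_ge (u q) i with hqi | hiq
    · -- q below i
      have hle : u q ≤ u p := hpmax q (Finset.mem_filter.mpr ⟨hq, hqi⟩)
      have hvq : 0 ≤ v p - v q :=
        (dEq_nonneg (h q hq p hpT)).mp (by omega)
      have hiq' : (2:ℤ)^k < i - u q := by
        have := lt_abs.mp (hc q hq); omega
      exact Or.inr (Or.inl ⟨by omega, by omega⟩)
    · -- q above i
      have hqi' : (2:ℤ)^k < u q - i := by
        have := lt_abs.mp (hc q hq); omega
      have : (2:ℤ)^(k+1) ≤ u q - u p := by omega
      have hv : (2:ℤ)^(k+1) ≤ v q - v p := dEq_ge (h p hpT q hq) this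
      exact Or.inr (Or.inr ⟨by omega, by omega⟩)

/-- Points of a configuration: the virtual left boundary `-1`, the right
boundary `m` (the length), and values of the assignment. -/
def pts (m : ℤ) (ν : ℕ → ℕ) : Option (Option ℕ) → ℤ
  | Option.none => -1
  | Option.some Option.none => m
  | Option.some (Option.some y) => (ν y : ℤ)

/-- Index set of points corresponding to a finite set of variables. -/
def TS (S : Finset ℕ) : Finset (Option (Option ℕ)) :=
  insert Option.none (insert (Option.some Option.none)
    (S.image fun y => Option.some (Option.some y)))

lemma none_mem_TS (S : Finset ℕ) : Option.none ∈ TS S := Finset.mem_insert_self _ _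

lemma some_none_mem_TS (S : Finset ℕ) : Option.some Option.none ∈ TS S :=
  Finset.mem_insert_of_mem (Finset.mem_insert_self _ _)

lemma ss_mem_TS {S : Finset ℕ} {y : ℕ} (hy : y ∈ S) :
    Option.some (Option.some y) ∈ TS S :=
  Finset.mem_insert_of_mem (Finset.mem_insert_of_mem (Finset.mem_image_of_mem _ hy))

lemma mem_TS {S : Finset ℕ} {p : Option (Option ℕ)} (hp : p ∈ TS S) :
    p = Option.none ∨ p = Option.some Option.none ∨
      ∃ y ∈ S, p = Option.some (Option.some y) := by
  simp only [TS, Finset.mem_insert, Finset.mem_image] at hp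
  rcases hp with h | h | ⟨y, hy, h⟩
  · exact Or.inl h
  · exact Or.inr (Or.inl h)
  · exact Or.inr (Or.inr ⟨y, hy, h.symm⟩)

lemma TS_mono {S S' : Finset ℕ} (h : S ⊆ S') : TS S ⊆ TS S' := by
  intro p hp
  rcases mem_TS hp with rfl | rfl | ⟨y, hy, rfl⟩
  · exact none_mem_TS _
  · exact some_none_mem_TS _
  · exact ss_mem_TS (h hy)

/-- The back-and-forth invariant between two configurations. -/
def Inv (k : ℕ) (m n : ℤ) (ν ν' : ℕ → ℕ) (S : Finset ℕ) : Prop :=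
  ∀ p ∈ TS S, ∀ q ∈ TS S,
    dEq k (pts m ν q - pts m ν p) (pts n ν' q - pts n ν' p)

lemma Inv_symm {k m n ν ν' S} (h : Inv k m n ν ν' S) : Inv k n m ν' ν S :=
  fun p hp q hq => dEq_symm (h p hp q hq)

lemma Inv_mono {k m n ν ν'} {S S' : Finset ℕ} (hS : S ⊆ S')
    (h : Inv k m n ν ν' S') : Inv k m n ν ν' S :=
  fun p hp q hq => h p (TS_mono hS hp) q (TS_mono hS hq)

lemma Inv_antitone {k k' m n ν ν' S} (hk : k' ≤ k) (h : Inv k m n ν ν' S) :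
    Inv k' m n ν ν' S :=
  fun p hp q hq => dEq_mono hk (h p hp q hq)

lemma pts_update_of_ne {m : ℤ} {ν : ℕ → ℕ} {x i : ℕ} {S : Finset ℕ}
    (hx : x ∉ S) {p : Option (Option ℕ)} (hp : p ∈ TS S) :
    pts m (Function.update ν x i) p = pts m ν p := by
  rcases mem_TS hp with rfl | rfl | ⟨y, hy, rfl⟩
  · rfl
  · rfl
  · have : y ≠ x := fun h => hx (h ▸ hy)
    simp [pts, Function.update_of_ne this]

/-- The key step for the `ex` case: extend the invariant by one point. -/
lemma Inv_update {t : ℕ} {m n : ℤ} {ν ν' : ℕ → ℕ} {x : ℕ} {S : Finset ℕ}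
    (hx : x ∉ S) (hInv : Inv (t+1) m n ν ν' S) (i : ℕ) (him : (i:ℤ) < m) :
    ∃ j : ℕ, (j:ℤ) < n ∧
      Inv t m n (Function.update ν x i) (Function.update ν' x j) (insert x S) := by
  obtain ⟨j, hj⟩ := extend (TS S) (pts m ν) (pts n ν') hInv (i:ℤ)
    ⟨Option.none, none_mem_TS S, by simp [pts]; omega⟩
  have hj0 : 0 ≤ j := by
    have := hj Option.none (none_mem_TS S)
    have := dEq_pos this
    simp [pts] at this
    omega
  have hjn : j < n := by
    have h1 := hj (Option.some Option.none) (some_none_mem_TS S)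
    have h2 := dEq_pos (dEq_neg h1)
    simp [pts] at h2
    omega
  refine ⟨j.toNat, by omega, ?_⟩
  have hjt : (j.toNat : ℤ) = j := Int.toNat_of_nonneg hj0
  -- evaluate points of the new configuration
  have hpt : ∀ p ∈ TS (insert x S),
      pts m (Function.update ν x i) p = if p = Option.some (Option.some x) then (i:ℤ)
        else pts m ν p := by
    intro p hp
    by_cases hpx : p = Option.some (Option.some x)
    · subst hpx; simp [pts]
    · rw [if_neg hpx]
      rcases mem_TS hp with rfl | rfl | ⟨y, hy, rfl⟩
      · rfl
      · rfl
      · have hyx : y ≠ x := by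
          intro h; subst h; exact hpx rfl
        simp [pts, Function.update_of_ne hyx]
  have hpt' : ∀ p ∈ TS (insert x S),
      pts n (Function.update ν' x j.toNat) p = if p = Option.some (Option.some x) then j
        else pts n ν' p := by
    intro p hp
    by_cases hpx : p = Option.some (Option.some x)
    · subst hpx; simp [pts, hjt]
    · rw [if_neg hpx]
      rcases mem_TS hp with rfl | rfl | ⟨y, hy, rfl⟩
      · rfl
      · rfl
      · have hyx : y ≠ x := by
          intro h; subst h; exact hpx rfl
        simp [pts, Function.update_of_ne hyx]
  intro p hp q hq
  rw [hpt p hp, hpt q hq, hpt' p hp, hpt' q hq]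
  have hmemT : ∀ r ∈ TS (insert x S), r ≠ Option.some (Option.some x) → r ∈ TS S := by
    intro r hr hrx
    rcases mem_TS hr with rfl | rfl | ⟨y, hy, rfl⟩
    · exact none_mem_TS _
    · exact some_none_mem_TS _
    · rcases Finset.mem_insert.mp hy with rfl | hy'
      · exact absurd rfl hrx
      · exact ss_mem_TS hy'
  by_cases hpx : p = Option.some (Option.some x) <;>
    by_cases hqx : q = Option.some (Option.some x)
  · simp only [if_pos hpx, if_pos hqx]
    exact Or.inl (by omega)
  · simp only [if_pos hpx, if_neg hqx]
    have h := dEq_neg (hj q (hmemT q hq hqx))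
    rw [neg_sub, neg_sub] at h
    exact h
  · simp only [if_neg hpx, if_pos hqx]
    exact hj p (hmemT p hp hpx)
  · simp only [if_neg hpx, if_neg hqx]
    exact dEq_mono (Nat.le_succ t) (hInv p (hmemT p hp hpx) q (hmemT q hq hqx))

lemma sat_char_iff {w : List Unit} {ν : ℕ → ℕ} {a : Unit} {x : ℕ} :
    MFO.Sat w ν (.char a x) ↔ ν x < w.length := by
  show w[ν x]? = some a ↔ _
  constructor
  · intro h
    exact (List.getElem?_eq_some_iff.mp h).1
  · intro h
    rw [List.getElem?_eq_getElem h]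

/-- The Ehrenfeucht–Fraïssé main lemma for the one-letter alphabet. -/
lemma ef (φ : MFO Unit) : ∀ k : ℕ, qd φ ≤ k → ∀ (w w' : List Unit) (ν ν' : ℕ → ℕ),
    Inv k (w.length : ℤ) (w'.length : ℤ) ν ν' (MFO.fv φ) →
    (MFO.Sat w ν φ ↔ MFO.Sat w' ν' φ) := by
  induction φ with
  | char a x =>
    intro k _ w w' ν ν' hInv
    have h := hInv (Option.some (Option.some x)) (ss_mem_TS (by simp [MFO.fv]))
      (Option.some Option.none) (some_none_mem_TS _)
    have := dEq_pos h
    simp only [pts] at this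
    rw [sat_char_iff, sat_char_iff]
    omega
  | lt x y =>
    intro k _ w w' ν ν' hInv
    have h := hInv (Option.some (Option.some x)) (ss_mem_TS (by simp [MFO.fv]))
      (Option.some (Option.some y)) (ss_mem_TS (by simp [MFO.fv]))
    have := dEq_pos h
    simp only [pts] at this
    show ν x < ν y ↔ ν' x < ν' y
    omega
  | not φ ih =>
    intro k hk w w' ν ν' hInv
    exact not_congr (ih k hk w w' ν ν' hInv)
  | or φ ψ ihφ ihψ =>
    intro k hk w w' ν ν' hInv
    have h1 := ihφ k (le_trans (le_max_left _ _) hk) w w' ν ν'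
      (Inv_mono (Finset.subset_union_left) hInv)
    have h2 := ihψ k (le_trans (le_max_right _ _) hk) w w' ν ν'
      (Inv_mono (Finset.subset_union_right) hInv)
    exact or_congr h1 h2
  | ex x φ ih =>
    intro k hk w w' ν ν' hInv
    obtain ⟨t, rfl⟩ : ∃ t, k = t + 1 := ⟨k - 1, by simp [qd] at hk; omega⟩
    have hqd : qd φ ≤ t := by simp [qd] at hk; omega
    have hxS : x ∉ MFO.fv φ \ {x} := by simp
    have hfvsub : MFO.fv φ ⊆ insert x (MFO.fv φ \ {x}) := by
      intro y hy
      by_cases h : y = x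
      · simp [h]
      · simp [hy, h]
    constructor
    · rintro ⟨i, hi, hsat⟩
      obtain ⟨j, hjn, hInv'⟩ := Inv_update hxS hInv i (by exact_mod_cast hi)
      refine ⟨j, by exact_mod_cast hjn, ?_⟩
      exact (ih t hqd w w' _ _ (Inv_mono hfvsub hInv')).mp hsat
    · rintro ⟨i, hi, hsat⟩
      obtain ⟨j, hjn, hInv'⟩ := Inv_update hxS (Inv_symm hInv) i (by exact_mod_cast hi)
      refine ⟨j, by exact_mod_cast hjn, ?_⟩
      exact (ih t hqd w w' _ _ (Inv_mono hfvsub (Inv_symm hInv'))).mpr hsat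

lemma unit_list_eq_replicate (w : List Unit) : w = List.replicate w.length () := by
  induction w with
  | nil => rfl
  | cons a t ih =>
    simp only [List.length_cons, List.replicate_succ]
    exact congrArg _ ih

lemma unit_list_ext {w₁ w₂ : List Unit} (h : w₁.length = w₂.length) : w₁ = w₂ := by
  rw [unit_list_eq_replicate w₁, unit_list_eq_replicate w₂, h]

/-- Even-length nonempty unit strings are not MFO-definable. -/
lemma not_definable_Leven : ¬ MFO.Definable Leven := by
  rintro ⟨φ, hfv, hL⟩
  set k := qd φ with hk
  set m := 2^(k+1) with hm
  have hInv : Inv k ((List.replicate m ()).length : ℤ)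
      ((List.replicate (m+1) ()).length : ℤ) (fun _ => 0) (fun _ => 0) (MFO.fv φ) := by
    rw [hfv]
    intro p hp q hq
    have h2 : (2:ℤ)^k ≤ ((List.replicate m ()).length : ℤ) - (-1) := by
      simp [hm]
      have : (2:ℤ)^k ≤ 2^(k+1) := pow_le_pow_right₀ (by norm_num) (Nat.le_succ k)
      omega
    have h2' : (2:ℤ)^k ≤ ((List.replicate (m+1) ()).length : ℤ) - (-1) := by
      simp [hm]
      have : (2:ℤ)^k ≤ 2^(k+1) := pow_le_pow_right₀ (by norm_num) (Nat.le_succ k)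
      omega
    rcases mem_TS hp with rfl | rfl | ⟨y, hy, rfl⟩ <;>
      rcases mem_TS hq with rfl | rfl | ⟨z, hz, rfl⟩ <;>
      simp_all [pts]
    · exact Or.inl rfl
    · exact Or.inr (Or.inl ⟨by omega, by omega⟩)
    · exact Or.inr (Or.inr ⟨by omega, by omega⟩)
    · exact Or.inl rfl
  have hsat := ef φ k le_rfl (List.replicate m ()) (List.replicate (m+1) ())
    (fun _ => 0) (fun _ => 0) hInv
  have heven : Even m := ⟨2^k, by rw [hm]; ring⟩
  have hmpos : 0 < m := by rw [hm]; positivity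
  have hmem : List.replicate m () ∈ Leven := by
    refine ⟨?_, by simpa using heven⟩
    simp only [ne_eq, List.replicate_eq_nil_iff]
    omega
  rw [hL] at hmem
  have hmem' : List.replicate (m+1) () ∈ MFO.Lang φ :=
    ⟨by simp, hsat.mp hmem.2⟩
  rw [← hL] at hmem'
  have hodd : Even (m + 1) := by simpa using hmem'.2
  rcases heven with ⟨c, hc⟩
  rcases hodd with ⟨d, hd⟩
  omega


/-! ### Definability of `{aa}` -/

def ge2 : MFO Unit := .ex 0 (.ex 1 (.lt 0 1))
def ge3 : MFO Unit := .ex 0 (.ex 1 (.ex 2 ((MFO.lt 0 1).and (.lt 1 2))))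
def phi2 : MFO Unit := ge2.and (.not ge3)

lemma sat_and {α : Type} {w : List α} {ν : ℕ → ℕ} {φ ψ : MFO α} :
    MFO.Sat w ν (φ.and ψ) ↔ MFO.Sat w ν φ ∧ MFO.Sat w ν ψ := by
  show ¬ (¬ MFO.Sat w ν φ ∨ ¬ MFO.Sat w ν ψ) ↔ _
  tauto

lemma sat_ge2 {w : List Unit} {ν : ℕ → ℕ} :
    MFO.Sat w ν ge2 ↔ 2 ≤ w.length := by
  show (∃ i < w.length, ∃ j < w.length,
      Function.update (Function.update ν 0 i) 1 j 0 <
      Function.update (Function.update ν 0 i) 1 j 1) ↔ _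
  simp only [Function.update]
  norm_num
  constructor
  · rintro ⟨i, hi, j, hj, hlt⟩
    omega
  · intro h
    exact ⟨0, by omega, 1, by omega, by omega⟩

lemma sat_ge3 {w : List Unit} {ν : ℕ → ℕ} :
    MFO.Sat w ν ge3 ↔ 3 ≤ w.length := by
  have h1 : ∀ ν' : ℕ → ℕ, MFO.Sat w ν' (MFO.ex 2 ((MFO.lt 0 1).and (.lt 1 2))) ↔
      ∃ c < w.length, ν' 0 < ν' 1 ∧ ν' 1 < c := by
    intro ν'
    show (∃ c < w.length, MFO.Sat w (Function.update ν' 2 c) ((MFO.lt 0 1).and (.lt 1 2))) ↔ _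
    refine exists_congr fun c => and_congr_right fun hc => ?_
    rw [sat_and]
    show (Function.update ν' 2 c 0 < Function.update ν' 2 c 1 ∧
        Function.update ν' 2 c 1 < Function.update ν' 2 c 2) ↔ _
    simp [Function.update]
  show (∃ i < w.length, ∃ j < w.length,
      MFO.Sat w (Function.update (Function.update ν 0 i) 1 j)
        (MFO.ex 2 ((MFO.lt 0 1).and (.lt 1 2)))) ↔ _
  constructor
  · rintro ⟨i, hi, j, hj, hs⟩
    rw [h1] at hs
    obtain ⟨c, hc, hij, hjc⟩ := hs
    simp [Function.update] at hij hjc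
    omega
  · intro h
    refine ⟨0, by omega, 1, by omega, ?_⟩
    rw [h1]
    refine ⟨2, by omega, ?_⟩
    simp [Function.update]

lemma fv_phi2 : MFO.fv phi2 = ∅ := by decide

lemma lang_phi2 : ({[(), ()]} : Set (List Unit)) = MFO.Lang phi2 := by
  ext w
  simp only [Set.mem_singleton_iff, MFO.Lang, Set.mem_setOf_eq]
  have hsat : MFO.Sat w (fun _ => 0) phi2 ↔ w.length = 2 := by
    rw [phi2, sat_and]
    have : MFO.Sat w (fun _ => 0) (MFO.not ge3) ↔ ¬ (3 ≤ w.length) := by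
      show ¬ MFO.Sat w (fun _ => 0) ge3 ↔ _
      rw [sat_ge3]
    rw [this, sat_ge2]
    omega
  constructor
  · rintro rfl
    exact ⟨by simp, hsat.mpr rfl⟩
  · rintro ⟨hne, hs⟩
    exact unit_list_ext (by rw [hsat.mp hs]; rfl)

/-! ### The Kleene star computation -/

lemma even_flatten (L : List (List Unit)) (h : ∀ y ∈ L, y = [(), ()]) :
    Even L.flatten.length := by
  induction L with
  | nil => simp
  | cons a t ih =>
    have ha := h a (by simp)
    obtain ⟨c, hc⟩ := ih (fun y hy => h y (by simp [hy]))
    exact ⟨c + 1, by simp [ha, hc]; omega⟩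

lemma star_eq : {w | w ∈ ({[(), ()]} : Language Unit)∗ ∧ w ≠ []} = Leven := by
  ext w
  simp only [Set.mem_setOf_eq, Leven]
  constructor
  · rintro ⟨hw, hne⟩
    refine ⟨hne, ?_⟩
    rw [Language.mem_kstar] at hw
    obtain ⟨L, rfl, hL⟩ := hw
    exact even_flatten L hL
  · rintro ⟨hne, c, hc⟩
    refine ⟨?_, hne⟩
    have hw : w = (List.replicate c [(), ()]).flatten := by
      apply unit_list_ext
      simp [List.length_flatten, hc]
      omega
    rw [hw]
    exact Language.join_mem_kstar fun y hy => List.eq_of_mem_replicate hy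
end MFOStar

/-- MFO-definable languages are not closed under Kleene star:
`L_aa = {aa}` is MFO-definable, but `L_aa*` restricted to nonempty strings,
which equals `L_even`, is not MFO-definable. -/
theorem mfo_not_closed_under_star :
    MFO.Definable ({[(), ()]} : Set (List Unit)) ∧
    {w | w ∈ ({[(), ()]} : Language Unit)∗ ∧ w ≠ []} = Leven ∧
    ¬ MFO.Definable Leven :=
  ⟨⟨MFOStar.phi2, MFOStar.fv_phi2, MFOStar.lang_phi2⟩,
    MFOStar.star_eq, MFOStar.not_definable_Leven⟩
end

section
/- The MSO logic is strictly more expressive than the MFO logic: every MFO-definable language is MSO-definable, and there exists an MSO-definable language (namely L_even = { a^(2n) | n ≥ 1 } over the one-letter alphabet {a}) that is not MFO-definable. -/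
/-- Formulas of monadic second-order logic of order (MSO) over alphabet `α`.
First-order and second-order (set) variables are represented by naturals. -/
inductive MSO (α : Type) : Type
  | char : α → ℕ → MSO α          -- `a(x)`
  | mem : ℕ → ℕ → MSO α           -- `X(x)` : `mem X x`
  | lt : ℕ → ℕ → MSO α            -- `x < y`
  | not : MSO α → MSO α
  | or : MSO α → MSO α → MSO α
  | ex1 : ℕ → MSO α → MSO α       -- `∃ x. φ`
  | ex2 : ℕ → MSO α → MSO α       -- `∃ X. φ`

namespace MSO

/-- Satisfaction of an MSO formula over a string `w` with first-order
assignment `ν₁` (positions) and second-order assignment `ν₂` (sets of positions). -/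
def Sat {α : Type} (w : List α) : (ℕ → ℕ) → (ℕ → Set ℕ) → MSO α → Prop
  | ν₁, _, .char a x => w[ν₁ x]? = some a
  | ν₁, ν₂, .mem X x => ν₁ x ∈ ν₂ X
  | ν₁, _, .lt x y => ν₁ x < ν₁ y
  | ν₁, ν₂, .not φ => ¬ Sat w ν₁ ν₂ φ
  | ν₁, ν₂, .or φ ψ => Sat w ν₁ ν₂ φ ∨ Sat w ν₁ ν₂ ψ
  | ν₁, ν₂, .ex1 x φ => ∃ i < w.length, Sat w (Function.update ν₁ x i) ν₂ φ
  | ν₁, ν₂, .ex2 X φ =>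
      ∃ S : Set ℕ, (∀ i ∈ S, i < w.length) ∧ Sat w ν₁ (Function.update ν₂ X S) φ

/-- Free first-order variables of an MSO formula. -/
def fv1 {α : Type} : MSO α → Finset ℕ
  | .char _ x => {x}
  | .mem _ x => {x}
  | .lt x y => {x, y}
  | .not φ => fv1 φ
  | .or φ ψ => fv1 φ ∪ fv1 ψ
  | .ex1 x φ => fv1 φ \ {x}
  | .ex2 _ φ => fv1 φ

/-- Free second-order variables of an MSO formula. -/
def fv2 {α : Type} : MSO α → Finset ℕ
  | .char _ _ => ∅
  | .mem X _ => {X}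
  | .lt _ _ => ∅
  | .not φ => fv2 φ
  | .or φ ψ => fv2 φ ∪ fv2 ψ
  | .ex1 _ φ => fv2 φ
  | .ex2 X φ => fv2 φ \ {X}

/-- The language of nonempty strings defined by an MSO formula
(intended to be used with sentences). -/
def Lang {α : Type} (φ : MSO α) : Set (List α) :=
  {w | w ≠ [] ∧ Sat w (fun _ => 0) (fun _ => ∅) φ}

/-- A language (of nonempty strings) is MSO-definable iff it is the language
of some MSO sentence (closed formula). -/
def Definable {α : Type} (L : Set (List α)) : Prop :=
  ∃ φ : MSO α, φ.fv1 = ∅ ∧ φ.fv2 = ∅ ∧ L = Lang φ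

end MSO

namespace MFO

/-- Translation of MFO into MSO. -/
def toMSO {α : Type} : MFO α → MSO α
  | .char a x => .char a x
  | .lt x y => .lt x y
  | .not φ => .not (toMSO φ)
  | .or φ ψ => .or (toMSO φ) (toMSO ψ)
  | .ex x φ => .ex1 x (toMSO φ)

lemma toMSO_fv1 {α : Type} (φ : MFO α) : (toMSO φ).fv1 = φ.fv := by
  induction φ <;> simp [toMSO, MSO.fv1, fv, *]

lemma toMSO_fv2 {α : Type} (φ : MFO α) : (toMSO φ).fv2 = ∅ := by
  induction φ <;> simp [toMSO, MSO.fv2, *]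

lemma toMSO_sat {α : Type} (φ : MFO α) (w : List α) :
    ∀ ν ν₂, MSO.Sat w ν ν₂ (toMSO φ) ↔ Sat w ν φ := by
  induction φ with
  | char a x => intro ν ν₂; simp [toMSO, MSO.Sat, Sat]
  | lt x y => intro ν ν₂; simp [toMSO, MSO.Sat, Sat]
  | not φ ih => intro ν ν₂; simp [toMSO, MSO.Sat, Sat, ih]
  | or φ ψ ih1 ih2 => intro ν ν₂; simp [toMSO, MSO.Sat, Sat, ih1, ih2]
  | ex x φ ih => intro ν ν₂; simp [toMSO, MSO.Sat, Sat, ih]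

lemma definable_mso {α : Type} (L : Set (List α)) (h : Definable L) : MSO.Definable L := by
  obtain ⟨φ, hfv, hL⟩ := h
  refine ⟨toMSO φ, by rw [toMSO_fv1, hfv], toMSO_fv2 φ, ?_⟩
  rw [hL]
  ext w
  simp [Lang, MSO.Lang, toMSO_sat]

end MFO

namespace MSO

def and {α : Type} (φ ψ : MSO α) : MSO α := .not (.or (.not φ) (.not ψ))
def imp {α : Type} (φ ψ : MSO α) : MSO α := .or (.not φ) ψ
def all1 {α : Type} (x : ℕ) (φ : MSO α) : MSO α := .not (.ex1 x (.not φ))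

def isFirst {α : Type} : MSO α := .not (.ex1 1 (.lt 1 0))
def isLast {α : Type} : MSO α := .not (.ex1 1 (.lt 0 1))
def isSucc {α : Type} : MSO α := and (.lt 0 1) (.not (.ex1 2 (and (.lt 0 2) (.lt 2 1))))
def altern {α : Type} : MSO α :=
  .or (and (.mem 0 0) (.not (.mem 0 1))) (and (.not (.mem 0 0)) (.mem 0 1))

def evenSentence {α : Type} : MSO α :=
  .ex2 0 (and (all1 0 (imp isFirst (.mem 0 0)))
    (and (all1 0 (all1 1 (imp isSucc altern)))
      (all1 0 (imp isLast (.not (.mem 0 0))))))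

lemma evenSentence_fv1 : (evenSentence (α := Unit)).fv1 = ∅ := by decide
lemma evenSentence_fv2 : (evenSentence (α := Unit)).fv2 = ∅ := by decide

variable {α : Type} {w : List α} {ν₁ : ℕ → ℕ} {ν₂ : ℕ → Set ℕ}

lemma sat_and {φ ψ : MSO α} :
    Sat w ν₁ ν₂ (and φ ψ) ↔ Sat w ν₁ ν₂ φ ∧ Sat w ν₁ ν₂ ψ := by
  show ¬ (¬ _ ∨ ¬ _) ↔ _
  tauto

lemma sat_imp {φ ψ : MSO α} :
    Sat w ν₁ ν₂ (imp φ ψ) ↔ (Sat w ν₁ ν₂ φ → Sat w ν₁ ν₂ ψ) := by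
  show ¬ _ ∨ _ ↔ _
  tauto

lemma sat_all1 {x : ℕ} {φ : MSO α} :
    Sat w ν₁ ν₂ (all1 x φ) ↔ ∀ i < w.length, Sat w (Function.update ν₁ x i) ν₂ φ := by
  simp [all1, Sat]

lemma sat_isFirst : Sat w ν₁ ν₂ (isFirst (α := α)) ↔ ∀ j < w.length, ¬ j < ν₁ 0 := by
  simp [isFirst, Sat, Function.update_apply]

lemma sat_isLast : Sat w ν₁ ν₂ (isLast (α := α)) ↔ ∀ j < w.length, ¬ ν₁ 0 < j := by
  simp [isLast, Sat, Function.update_apply]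

lemma sat_isSucc : Sat w ν₁ ν₂ (isSucc (α := α)) ↔
    ν₁ 0 < ν₁ 1 ∧ ∀ l < w.length, ¬(ν₁ 0 < l ∧ l < ν₁ 1) := by
  rw [isSucc, sat_and]
  have hinner : ∀ l, Sat w (Function.update ν₁ 2 l) ν₂ (and (.lt 0 2) (.lt 2 1))
      ↔ (ν₁ 0 < l ∧ l < ν₁ 1) := by
    intro l
    rw [sat_and]
    simp [Sat, Function.update_apply]
  constructor
  · rintro ⟨h1, h2⟩
    simp only [Sat, not_exists, not_and] at h2
    exact ⟨h1, fun l hl hc => (h2 l hl) ((hinner l).mpr hc)⟩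
  · rintro ⟨h1, h2⟩
    refine ⟨h1, ?_⟩
    simp only [Sat, not_exists, not_and]
    intro l hl hc
    exact h2 l hl ((hinner l).mp hc)

lemma sat_altern : Sat w ν₁ ν₂ (altern (α := α)) ↔
    ((ν₁ 0 ∈ ν₂ 0 ∧ ν₁ 1 ∉ ν₂ 0) ∨ (ν₁ 0 ∉ ν₂ 0 ∧ ν₁ 1 ∈ ν₂ 0)) := by
  rw [altern]
  show Sat w ν₁ ν₂ _ ∨ Sat w ν₁ ν₂ _ ↔ _
  rw [sat_and, sat_and]
  simp [Sat]

lemma sat_evenSentence (hw : w ≠ []) :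
    Sat w (fun _ => 0) (fun _ => ∅) (evenSentence (α := α)) ↔ Even w.length := by
  set n := w.length with hn
  have hn1 : 1 ≤ n := Nat.one_le_iff_ne_zero.mpr (by simpa [hn] using hw)
  rw [evenSentence]
  show (∃ S : Set ℕ, _ ∧ _) ↔ _
  constructor
  · rintro ⟨S, hS, hsat⟩
    rw [sat_and, sat_and] at hsat
    obtain ⟨hA, hB, hC⟩ := hsat
    rw [sat_all1] at hA hC hB
    have hA' : (0 : ℕ) ∈ S := by
      have h1 := hA 0 (by omega)
      rw [sat_imp] at h1
      have h2 := h1 (by rw [sat_isFirst]; simp [Function.update_apply])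
      simpa [Sat, Function.update_apply] using h2
    have hB' : ∀ i, i + 1 < n → (i ∈ S ↔ (i+1) ∉ S) := by
      intro i hi
      have h1 := hB i (by omega)
      rw [sat_all1] at h1
      have h2 := h1 (i+1) hi
      rw [sat_imp] at h2
      have h3 := h2 (by
        rw [sat_isSucc]
        simp only [Function.update_apply]
        norm_num)
      rw [sat_altern] at h3
      simp only [Function.update_apply] at h3
      norm_num at h3
      tauto
    have key : ∀ i < n, (i ∈ S ↔ Even i) := by
      intro i
      induction i with
      | zero => intro _; simpa using hA'
      | succ i ih =>
        intro hi
        have h1 := ih (by omega)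
        have h2 := hB' i hi
        rw [Nat.even_add_one]
        tauto
    have hC' : (n - 1) ∉ S := by
      have h1 := hC (n-1) (by omega)
      rw [sat_imp] at h1
      have h2 := h1 (by
        rw [sat_isLast]
        simp only [Function.update_apply]
        norm_num
        intro l hl; omega)
      simpa [Sat, Function.update_apply] using h2
    have h4 := key (n-1) (by omega)
    have h5 : ¬ Even (n-1) := by tauto
    have h6 := Nat.even_add_one (n := n-1)
    rw [Nat.sub_add_cancel hn1] at h6
    exact h6.mpr h5
  · intro hev
    refine ⟨{i | i < n ∧ Even i}, fun i hi => hi.1, ?_⟩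
    rw [sat_and, sat_and, sat_all1, sat_all1, sat_all1]
    refine ⟨?_, ?_, ?_⟩
    · intro i hi
      rw [sat_imp, sat_isFirst]
      intro hf
      simp only [Function.update_apply] at hf
      norm_num at hf
      have hi0 : i = 0 := by
        by_contra h
        exact absurd (hf 0 (by omega)) (by omega)
      simp [Sat, Function.update_apply, hi0]
      omega
    · intro i hi
      rw [sat_all1]
      intro j hj
      rw [sat_imp, sat_isSucc]
      simp only [Function.update_apply]
      norm_num
      intro hij hbet
      have hji : j = i + 1 := by
        by_contra h
        exact absurd (hbet (i+1) (by omega)) (by omega)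
      rw [sat_altern]
      simp only [Function.update_apply]
      simp only [show ((0:ℕ) = 1) = False by simp, show ((0:ℕ) = 0) = True by simp,
        show ((1:ℕ) = 1) = True by simp, if_true, if_false]
      subst hji
      simp only [Set.mem_setOf_eq]
      rw [Nat.even_add_one]
      by_cases h : Even i
      · left; constructor
        · exact ⟨by omega, h⟩
        · rintro ⟨-, h2⟩; exact h2 h
      · right; constructor
        · rintro ⟨-, h2⟩; exact h h2
        · exact ⟨by omega, fun h2 => h h2⟩
    · intro i hi
      rw [sat_imp, sat_isLast]
      intro hl
      simp only [Function.update_apply] at hl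
      norm_num at hl
      have hi1 : i = n - 1 := by
        by_contra h
        exact absurd (hl (i+1) (by omega)) (by omega)
      show ¬ Sat w _ _ _
      simp only [Sat, Function.update_apply]
      simp only [show ((0:ℕ) = 0) = True by simp, if_true, not_not]
      simp only [Set.mem_setOf_eq]
      rintro ⟨-, hevi⟩
      subst hi1
      rw [Nat.even_sub hn1] at hevi
      exact Nat.not_even_one (hevi.mp hev)

lemma leven_definable : Definable Leven := by
  refine ⟨evenSentence, evenSentence_fv1, evenSentence_fv2, ?_⟩
  ext w
  simp only [Leven, Lang, Set.mem_setOf_eq]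
  constructor
  · rintro ⟨hne, hev⟩; exact ⟨hne, (sat_evenSentence hne).mpr hev⟩
  · rintro ⟨hne, hs⟩; exact ⟨hne, (sat_evenSentence hne).mp hs⟩

end MSO

namespace MFO

/-- Quantifier depth. -/
def qd_s9 {α : Type} : MFO α → ℕ
  | .char _ _ => 0
  | .lt _ _ => 0
  | .not φ => qd_s9 φ
  | .or φ ψ => max (qd_s9 φ) (qd_s9 ψ)
  | .ex _ φ => qd_s9 φ + 1

/-- Agreement of two pairs of positions up to truncated distance `k`. -/
def Agree (k a b a' b' : ℕ) : Prop :=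
  (a ≤ b ↔ a' ≤ b') ∧ (b ≤ a ↔ b' ≤ a') ∧
  (a ≤ b → min (b - a) k = min (b' - a') k) ∧
  (b ≤ a → min (a - b) k = min (a' - b') k)

lemma Agree.mono {k m a b a' b'} (h : Agree k a b a' b') (hm : m ≤ k) : Agree m a b a' b' := by
  unfold Agree at *; omega

lemma Agree.swap {k a b a' b'} (h : Agree k a b a' b') : Agree k b a b' a' := by
  unfold Agree at *; omega

lemma Agree.flip {k a b a' b'} (h : Agree k a b a' b') : Agree k a' b' a b := by
  unfold Agree at *; omega

/-- extended assignment with the two endpoints pinned at indices 0 and 1. -/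
def ext (ν : ℕ → ℕ) (n : ℕ) : ℕ → ℕ
  | 0 => 0
  | 1 => n - 1
  | t + 2 => ν t

/-- Equivalence of configurations up to truncated distance `k`. -/
def Rel (k n n' : ℕ) (ν ν' : ℕ → ℕ) : Prop :=
  1 ≤ n ∧ 1 ≤ n' ∧ (∀ t, ν t < n ∧ ν' t < n') ∧
  ∀ s t, Agree k (ext ν n s) (ext ν n t) (ext ν' n' s) (ext ν' n' t)

lemma Rel.symm {k n n' ν ν'} (h : Rel k n n' ν ν') : Rel k n' n ν' ν :=
  ⟨h.2.1, h.1, fun t => ⟨(h.2.2.1 t).2, (h.2.2.1 t).1⟩, fun s t => (h.2.2.2 s t).flip⟩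

lemma ext_bound {ν : ℕ → ℕ} {n : ℕ} (hn : 1 ≤ n) (hb : ∀ t, ν t < n) :
    ∀ t, ext ν n t < n := by
  intro t
  rcases t with _ | _ | t <;> simp [ext] <;> first | omega | exact hb t

lemma ext_update {ν : ℕ → ℕ} {n z i : ℕ} :
    ext (Function.update ν z i) n = Function.update (ext ν n) (z + 2) i := by
  funext t
  rcases t with _ | _ | t
  · simp [ext, Function.update_apply]
  · simp [ext, Function.update_apply]
  · simp only [ext, Function.update_apply]
    by_cases h : t = z <;> simp [h]

/-- arithmetic for the cases where the new point follows the greatest pinned value `L`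
below `i` (cases 1 and 3 of the construction). -/
lemma ext_case13 {m L L' U p p' i : ℕ} (hm : 1 ≤ m) (ha : Agree (2 * m) L p L' p')
    (hLle : L ≤ i) (hiU : i ≤ U) (hc : p ≤ L ∨ U ≤ p) :
    (i - L < m → Agree m p i p' (L' + (i - L))) ∧
    (m ≤ i - L → m ≤ U - i → Agree m p i p' (L' + m)) := by
  unfold Agree at *; omega

/-- arithmetic for the case where the new point precedes the least pinned value `U`
above `i` (case 2 of the construction). -/
lemma ext_case2 {m U U' p p' i : ℕ} (hm : 1 ≤ m) (ha : Agree (2 * m) U p U' p')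
    (ha0 : Agree (2 * m) 0 U 0 U') (him : m ≤ i)
    (hiU : i ≤ U) (hc : p + m ≤ i ∨ U ≤ p) (hh : U - i < m) :
    Agree m p i p' (U' - (U - i)) := by
  obtain ⟨ha1, ha2, ha3, ha4⟩ := ha
  obtain ⟨-, -, hb3, -⟩ := ha0
  have h0 : min U (2 * m) = min U' (2 * m) := by omega
  clear hb3
  rcases hc with hc | hc
  · refine ⟨?_, ?_, ?_, ?_⟩ <;> omega
  · refine ⟨?_, ?_, ?_, ?_⟩ <;> omega

/-- the constructed point is a valid position. -/
lemma ext_bnd {m L L' U U' i n n' : ℕ} (hm : 1 ≤ m)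
    (haL1 : Agree (2 * m) L (n - 1) L' (n' - 1))
    (hU'b : U' < n') (hi : i < n) (hn : 1 ≤ n) (hn' : 1 ≤ n')
    (hLle : L ≤ i) (hiU : i ≤ U) (hUb : U < n) :
    (if i - L < m then L' + (i - L) else if U - i < m then U' - (U - i) else L' + m) < n' := by
  unfold Agree at haL1
  split_ifs <;> omega

/-- The key back-and-forth extension step. -/
lemma extend {m n n' : ℕ} (hm : 1 ≤ m) {ν ν' : ℕ → ℕ} (h : Rel (2 * m) n n' ν ν')
    {i : ℕ} (hi : i < n) :
    ∃ i' < n', ∀ t, Agree m (ext ν n t) i (ext ν' n' t) i' := by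
  classical
  obtain ⟨hn, hn', hb, hA⟩ := h
  set E := ext ν n with hE
  set E' := ext ν' n' with hE'
  have hEb : ∀ t, E t < n := ext_bound hn (fun t => (hb t).1)
  have hEb' : ∀ t, E' t < n' := ext_bound hn' (fun t => (hb t).2)
  have hE0 : E 0 = 0 := rfl
  have hE1 : E 1 = n - 1 := rfl
  have hE0' : E' 0 = 0 := rfl
  have hE1' : E' 1 = n' - 1 := rfl
  -- greatest pinned value ≤ i, least pinned value ≥ i
  have hex : ∃ tL, E tL ≤ i ∧ ∀ t, E t ≤ i → E t ≤ E tL := by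
    obtain ⟨p, hp⟩ := ((Finset.range n).filter
        (fun p => (∃ t, E t = p) ∧ p ≤ i)).exists_max_image id
      ⟨0, by simp; exact ⟨by omega, 0, hE0⟩⟩
    rw [Finset.mem_filter] at hp
    obtain ⟨⟨-, ⟨tL, htL⟩, hle⟩, hmax⟩ := hp
    refine ⟨tL, htL ▸ hle, fun t ht => ?_⟩
    rw [htL]
    exact hmax (E t) (by rw [Finset.mem_filter]; exact ⟨Finset.mem_range.mpr (hEb t), ⟨t, rfl⟩, ht⟩)
  have hex' : ∃ tU, i ≤ E tU ∧ ∀ t, i ≤ E t → E tU ≤ E t := by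
    obtain ⟨p, hp⟩ := ((Finset.range n).filter
        (fun p => (∃ t, E t = p) ∧ i ≤ p)).exists_min_image id
      ⟨n - 1, by simp; exact ⟨by omega, ⟨1, hE1⟩, by omega⟩⟩
    rw [Finset.mem_filter] at hp
    obtain ⟨⟨-, ⟨tU, htU⟩, hle⟩, hmin⟩ := hp
    refine ⟨tU, htU ▸ hle, fun t ht => ?_⟩
    rw [htU]
    exact hmin (E t) (by rw [Finset.mem_filter]; exact ⟨Finset.mem_range.mpr (hEb t), ⟨t, rfl⟩, ht⟩)
  obtain ⟨tL, hLle, hLmax⟩ := hex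
  obtain ⟨tU, hUge, hUmin⟩ := hex'
  obtain ⟨L, htL⟩ : ∃ L, E tL = L := ⟨_, rfl⟩
  obtain ⟨U, htU⟩ : ∃ U, E tU = U := ⟨_, rfl⟩
  obtain ⟨L', htL'⟩ : ∃ L', E' tL = L' := ⟨_, rfl⟩
  obtain ⟨U', htU'⟩ : ∃ U', E' tU = U' := ⟨_, rfl⟩
  rw [htL] at hLle hLmax
  rw [htU] at hUge hUmin
  have haL1 := hA tL 1
  rw [htL, htL', hE1, hE1'] at haL1
  have hU'b : U' < n' := htU' ▸ hEb' tU
  have hUb : U < n := htU ▸ hEb tU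
  refine ⟨if i - L < m then L' + (i - L) else if U - i < m then U' - (U - i) else L' + m,
    ext_bnd hm haL1 hU'b hi hn hn' hLle hUge hUb, fun t => ?_⟩
  have hcase : E t ≤ L ∨ U ≤ E t := by
    rcases le_or_gt (E t) i with hc | hc
    · exact Or.inl (hLmax t hc)
    · exact Or.inr (hUmin t (le_of_lt hc))
  split_ifs with hc1 hc2
  · have haLt := hA tL t
    rw [htL, htL'] at haLt
    exact (ext_case13 hm haLt hLle hUge hcase).1 hc1
  · have haUt := hA tU t
    rw [htU, htU'] at haUt
    have haU0 := hA 0 tU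
    rw [hE0, hE0', htU, htU'] at haU0
    refine ext_case2 hm haUt haU0 (by omega) hUge ?_ hc2
    rcases hcase with hc | hc
    · left; omega
    · right; exact hc
  · have haLt := hA tL t
    rw [htL, htL'] at haLt
    exact (ext_case13 hm haLt hLle hUge hcase).2 (by omega) (by omega)

lemma Agree.refl {k a a' : ℕ} : Agree k a a a' a' := by unfold Agree; omega

/-- One quantifier step: the relation can be maintained while halving the distance bound. -/
lemma update_step {m n n' : ℕ} (hm : 1 ≤ m) {ν ν' : ℕ → ℕ} (h : Rel (2 * m) n n' ν ν')
    {i : ℕ} (hi : i < n) (x : ℕ) :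
    ∃ i' < n', Rel m n n' (Function.update ν x i) (Function.update ν' x i') := by
  obtain ⟨i', hi', hagree⟩ := extend hm h hi
  obtain ⟨hn, hn', hb, hA⟩ := h
  refine ⟨i', hi', hn, hn', ?_, ?_⟩
  · intro t
    rcases eq_or_ne t x with rfl | ht
    · simp [Function.update_self]; exact ⟨hi, hi'⟩
    · simp [Function.update_of_ne ht]; exact hb t
  · intro s t
    rw [ext_update, ext_update]
    rcases eq_or_ne s (x + 2) with rfl | hs <;> rcases eq_or_ne t (x + 2) with rfl | ht
    · simp only [Function.update_self]
      exact Agree.refl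
    · simp only [Function.update_self, Function.update_of_ne ht]
      exact (hagree t).swap
    · simp only [Function.update_self, Function.update_of_ne hs]
      exact hagree s
    · simp only [Function.update_of_ne hs, Function.update_of_ne ht]
      exact (hA s t).mono (by omega)

/-- Strings of one-letter alphabet indistinguishable under `Rel (2^(qd φ))` satisfy
the same MFO formulas. -/
lemma sat_iff (φ : MFO Unit) : ∀ k, qd_s9 φ ≤ k → ∀ n n' ν ν', Rel (2 ^ k) n n' ν ν' →
    (Sat (List.replicate n ()) ν φ ↔ Sat (List.replicate n' ()) ν' φ) := by
  induction φ with
  | char a x =>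
    intro k _ n n' ν ν' hrel
    obtain ⟨hn, hn', hb, -⟩ := hrel
    show (List.replicate n ())[ν x]? = some a ↔ (List.replicate n' ())[ν' x]? = some a
    rcases a
    rw [List.getElem?_replicate, List.getElem?_replicate]
    rw [if_pos (hb x).1, if_pos (hb x).2]
  | lt x y =>
    intro k _ n n' ν ν' hrel
    have h := hrel.2.2.2 (x + 2) (y + 2)
    unfold Agree at h
    show ν x < ν y ↔ ν' x < ν' y
    have hx : ext ν n (x + 2) = ν x := rfl
    have hy : ext ν n (y + 2) = ν y := rfl
    have hx' : ext ν' n' (x + 2) = ν' x := rfl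
    have hy' : ext ν' n' (y + 2) = ν' y := rfl
    rw [hx, hy, hx', hy'] at h
    omega
  | not φ ih =>
    intro k hk n n' ν ν' hrel
    show ¬ _ ↔ ¬ _
    rw [ih k hk n n' ν ν' hrel]
  | or φ ψ ih1 ih2 =>
    intro k hk n n' ν ν' hrel
    rw [qd_s9] at hk
    show _ ∨ _ ↔ _ ∨ _
    rw [ih1 k (by omega) n n' ν ν' hrel, ih2 k (by omega) n n' ν ν' hrel]
  | ex x φ ih =>
    intro k hk n n' ν ν' hrel
    rw [qd_s9] at hk
    have hk1 : 1 ≤ k := by omega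
    have hpow : 2 ^ k = 2 * 2 ^ (k - 1) := by
      rw [← pow_succ']
      congr 1
      omega
    rw [hpow] at hrel
    have hm : 1 ≤ 2 ^ (k - 1) := Nat.one_le_two_pow
    show (∃ i < (List.replicate n ()).length, _) ↔ (∃ i < (List.replicate n' ()).length, _)
    rw [List.length_replicate, List.length_replicate]
    constructor
    · rintro ⟨i, hi, hsat⟩
      obtain ⟨i', hi', hrel'⟩ := update_step hm hrel hi x
      exact ⟨i', hi', (ih (k - 1) (by omega) n n' _ _ hrel').mp hsat⟩
    · rintro ⟨i', hi', hsat⟩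
      obtain ⟨i, hi, hrel'⟩ := update_step hm hrel.symm hi' x
      exact ⟨i, hi, (ih (k - 1) (by omega) n' n _ _ hrel').mp hsat⟩

/-- The initial relation between two long enough strings. -/
lemma init_rel {K n n' : ℕ} (hK : 1 ≤ K) (hn : K + 1 ≤ n) (hn' : K + 1 ≤ n') :
    Rel K n n' (fun _ => 0) (fun _ => 0) := by
  refine ⟨by omega, by omega, fun t => ⟨by show (0:ℕ) < n; omega, by show (0:ℕ) < n'; omega⟩,
    fun s t => ?_⟩
  have hv : ∀ t, ext (fun _ => (0:ℕ)) n t = 0 ∨ ext (fun _ => (0:ℕ)) n t = n - 1 := by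
    intro t; rcases t with _ | _ | t <;> simp [ext]
  have hv' : ∀ t, (ext (fun _ => (0:ℕ)) n t = 0 ↔ ext (fun _ => (0:ℕ)) n' t = 0) ∧
      (ext (fun _ => (0:ℕ)) n t = n - 1 ↔ ext (fun _ => (0:ℕ)) n' t = n' - 1) := by
    intro t; rcases t with _ | _ | t <;> simp [ext] <;> omega
  rcases hv s with h1 | h1 <;> rcases hv t with h2 | h2 <;>
    rcases hv' s with ⟨h3, h4⟩ <;> rcases hv' t with ⟨h5, h6⟩ <;> unfold Agree <;> omega

/-- `Leven` is not MFO-definable. -/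
lemma leven_not_definable : ¬ Definable Leven := by
  rintro ⟨φ, -, hL⟩
  set k := qd_s9 φ with hk
  set n := 2 * 2 ^ k + 2 with hn
  have h1 : Rel (2 ^ k) n (n + 1) (fun _ => 0) (fun _ => 0) := by
    have hK := Nat.one_le_two_pow (n := k)
    have hnn : 2 ^ k + 1 ≤ n := by rw [hn]; omega
    exact init_rel hK hnn (by omega)
  have h2 := sat_iff φ k le_rfl n (n + 1) _ _ h1
  have hkk := Nat.one_le_two_pow (n := k)
  have hnn : n = 2 * 2 ^ k + 2 := hn
  have hne : List.replicate n () ≠ [] := by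
    intro h
    have h3 : (List.replicate n ()).length = n := List.length_replicate
    rw [h] at h3
    simp at h3
  have hne' : List.replicate (n + 1) () ≠ [] := by
    intro h
    have h3 : (List.replicate (n + 1) ()).length = n + 1 := List.length_replicate
    rw [h] at h3
    simp at h3
  have hw : List.replicate n () ∈ Leven := by
    refine ⟨hne, ?_⟩
    rw [List.length_replicate, hnn]
    exact ⟨2 ^ k + 1, by ring⟩
  have hw' : List.replicate (n + 1) () ∉ Leven := by
    rintro ⟨-, hev⟩
    rw [List.length_replicate, hnn] at hev
    obtain ⟨r, hr⟩ := hev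
    omega
  rw [hL] at hw hw'
  obtain ⟨-, hsat⟩ := hw
  exact hw' ⟨hne', h2.mp hsat⟩

end MFO


/-- MSO is strictly more expressive than MFO: every
MFO-definable language is MSO-definable, and the MSO-definable language
`L_even` is not MFO-definable. -/
theorem mso_strictly_more_expressive_than_mfo :
    (∀ (α : Type) (L : Set (List α)), MFO.Definable L → MSO.Definable L) ∧
    MSO.Definable Leven ∧ ¬ MFO.Definable Leven := by
  exact ⟨fun _ L => MFO.definable_mso L, MSO.leven_definable, MFO.leven_not_definable⟩
end
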